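/- arXiv:1605.03275 — 9 statements merged into one kernel-verified Lean document; each statement's English description precedes it below -/
import Mathlib

section
/- If ABC is a triangle right-angled at A, then the B-Neuberg circle and the C-Neuberg circle of ABC are orthogonal, i.e., n_b² + n_c² = N_bN_c², where N_b, N_c are the centers and n_b, n_c the radii of these circles. -/
open EuclideanGeometry

lemma ortho2 {u v w : EuclideanSpace ℝ (Fin 2)} (hu : u ≠ 0) (hv : v ≠ 0)
    (huv : inner ℝ u v = (0:ℝ)) (hwu : inner ℝ w u = (0:ℝ)) (hwv : inner ℝ w v = (0:ℝ)) : w = 0 := by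
  have hun : (0:ℝ) < u 0 ^ 2 + u 1 ^ 2 := by
    have h2 : ‖u‖ ^ 2 = u 0 ^ 2 + u 1 ^ 2 := by
      rw [EuclideanSpace.norm_eq u, Real.sq_sqrt (by positivity)]
      simp [Fin.sum_univ_two, sq]
    nlinarith [norm_pos_iff.2 hu]
  have hvn : (0:ℝ) < v 0 ^ 2 + v 1 ^ 2 := by
    have h2 : ‖v‖ ^ 2 = v 0 ^ 2 + v 1 ^ 2 := by
      rw [EuclideanSpace.norm_eq v, Real.sq_sqrt (by positivity)]
      simp [Fin.sum_univ_two, sq]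
    nlinarith [norm_pos_iff.2 hv]
  simp only [PiLp.inner_apply, RCLike.inner_apply, conj_trivial, Fin.sum_univ_two] at huv hwu hwv
  have hdet : u 0 * v 1 - u 1 * v 0 ≠ 0 := by
    intro h
    nlinarith [sq_nonneg (u 0 * v 1 - u 1 * v 0)]
  have hw0 : w 0 = 0 := by
    have h : w 0 * (u 0 * v 1 - u 1 * v 0) = 0 := by linear_combination v 1 * hwu - u 1 * hwv
    rcases mul_eq_zero.1 h with h | h
    · exact h
    · exact absurd h hdet
  have hw1 : w 1 = 0 := by
    have h : w 1 * (u 0 * v 1 - u 1 * v 0) = 0 := by linear_combination u 0 * hwv - v 0 * hwu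
    rcases mul_eq_zero.1 h with h | h
    · exact h
    · exact absurd h hdet
  ext i
  fin_cases i <;> simp [hw0, hw1]

set_option maxHeartbeats 1000000 in
/-- Data extraction for a Neuberg-type center. -/
lemma neuberg_data (P Q R N : EuclideanSpace ℝ (Fin 2)) (ω : ℝ)
    (hsin : 0 < Real.sin ω) (hcos : 0 < Real.cos ω)
    (hd0 : Q ≠ P) (he0 : R ≠ P)
    (hperp : inner ℝ (Q -ᵥ P) (R -ᵥ P) = (0:ℝ))
    (h1 : dist N Q = dist N P) (h2 : ∠ Q N P = 2 * ω)
    (h3 : (affineSpan ℝ ({Q, P} : Set (EuclideanSpace ℝ (Fin 2)))).SSameSide N R) :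
    inner ℝ (N -ᵥ P) (Q -ᵥ P) = ‖Q -ᵥ P‖ ^ 2 / 2 ∧
    ‖N -ᵥ P‖ ^ 2 = ‖Q -ᵥ P‖ ^ 2 * (1 + Real.cot ω ^ 2) / 4 ∧
    inner ℝ (N -ᵥ P) (R -ᵥ P) = ‖Q -ᵥ P‖ * ‖R -ᵥ P‖ * Real.cot ω / 2 := by
  set d := Q -ᵥ P with hd
  set e := R -ᵥ P with he
  set n := N -ᵥ P with hn
  have hdz : d ≠ 0 := vsub_ne_zero.2 hd0
  have hez : e ≠ 0 := vsub_ne_zero.2 he0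
  have hdp : (0:ℝ) < ‖d‖ := norm_pos_iff.2 hdz
  have hep : (0:ℝ) < ‖e‖ := norm_pos_iff.2 hez
  have hsne : Real.sin ω ≠ 0 := ne_of_gt hsin
  have hcot : Real.cot ω = Real.cos ω / Real.sin ω := Real.cot_eq_cos_div_sin ω
  -- Step 1 : inner ℝ n d = ‖d‖^2/2
  have hNQ : N -ᵥ Q = n - d := (vsub_sub_vsub_cancel_right N Q P).symm
  have h1' : ‖n - d‖ = ‖n‖ := by
    have e1 : dist N Q = ‖n - d‖ := by
      rw [dist_eq_norm_vsub (EuclideanSpace ℝ (Fin 2)) N Q, hNQ]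
    have e2 : dist N P = ‖n‖ := dist_eq_norm_vsub _ N P
    rw [e1, e2] at h1
    exact h1
  have hnd : inner ℝ n d = ‖d‖ ^ 2 / 2 := by
    have := norm_sub_sq_real n d
    rw [h1'] at this
    linarith
  -- Step 2 : norm of n
  have hQN : Q -ᵥ N = d - n := (vsub_sub_vsub_cancel_right Q N P).symm
  have hPN : P -ᵥ N = -n := by rw [hn, neg_vsub_eq_vsub_rev]
  have key := InnerProductGeometry.cos_angle_mul_norm_mul_norm (Q -ᵥ N) (P -ᵥ N)
  rw [show InnerProductGeometry.angle (Q -ᵥ N) (P -ᵥ N) = ∠ Q N P from rfl, h2,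
    hQN, hPN] at key
  have hpyth := Real.sin_sq_add_cos_sq ω
  have key' : (2 * Real.cos ω ^ 2 - 1) * ‖n‖ ^ 2 = ‖n‖ ^ 2 - ‖d‖ ^ 2 / 2 := by
    rw [Real.cos_two_mul] at key
    have hiq : (inner ℝ (d - n) (-n) : ℝ) = ‖n‖ ^ 2 - inner ℝ n d := by
      rw [inner_neg_right, inner_sub_left, real_inner_comm d n,
        real_inner_self_eq_norm_sq]
      ring
    rw [hiq, hnd, norm_sub_rev, h1', norm_neg] at key
    nlinarith [key]
  have hn2 : ‖n‖ ^ 2 * (4 * Real.sin ω ^ 2) = ‖d‖ ^ 2 := by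
    linear_combination (-2) * key' + 4 * ‖n‖ ^ 2 * hpyth
  have hn3 : ‖n‖ ^ 2 = ‖d‖ ^ 2 * (1 + Real.cot ω ^ 2) / 4 := by
    have h14 : 1 + Real.cot ω ^ 2 = 1 / Real.sin ω ^ 2 := by
      rw [hcot, div_pow]
      field_simp
      exact hpyth
    have hs2 : (Real.sin ω ^ 2) ≠ 0 := pow_ne_zero _ hsne
    rw [h14]
    field_simp
    linear_combination hn2
  -- Step 3 : sign of inner ℝ n e from SSameSide
  obtain ⟨hw, hNs, hRs⟩ := h3
  obtain ⟨p₁, hp₁, p₂, hp₂, hray⟩ := hw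
  have hspan : ∀ z ∈ affineSpan ℝ ({Q, P} : Set (EuclideanSpace ℝ (Fin 2))),
      inner ℝ (z -ᵥ P) e = (0:ℝ) := by
    intro z hz
    have hq : P ∈ affineSpan ℝ ({Q, P} : Set (EuclideanSpace ℝ (Fin 2))) :=
      right_mem_affineSpan_pair ℝ Q P
    have hm := AffineSubspace.vsub_mem_direction hz hq
    rw [direction_affineSpan, vectorSpan_pair] at hm
    obtain ⟨t, ht⟩ := Submodule.mem_span_singleton.1 hm
    rw [← ht, real_inner_smul_left, ← hd, hperp, mul_zero]
  have hNe : (inner ℝ (N -ᵥ p₁) e : ℝ) = inner ℝ n e := by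
    have hh : N -ᵥ p₁ = n - (p₁ -ᵥ P) := (vsub_sub_vsub_cancel_right N p₁ P).symm
    rw [hh, inner_sub_left, hspan p₁ hp₁, sub_zero]
  have hRe : (inner ℝ (R -ᵥ p₂) e : ℝ) = ‖e‖ ^ 2 := by
    have hh : R -ᵥ p₂ = e - (p₂ -ᵥ P) := (vsub_sub_vsub_cancel_right R p₂ P).symm
    rw [hh, inner_sub_left, hspan p₂ hp₂, sub_zero, real_inner_self_eq_norm_sq]
  have hNp : N -ᵥ p₁ ≠ 0 := by
    intro h
    exact hNs (vsub_eq_zero_iff_eq.1 h ▸ hp₁)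
  have hRp : R -ᵥ p₂ ≠ 0 := by
    intro h
    exact hRs (vsub_eq_zero_iff_eq.1 h ▸ hp₂)
  obtain ⟨r₁, r₂, hr₁, hr₂, hreq⟩ := hray.exists_pos hNp hRp
  have hinner := congrArg (fun x : EuclideanSpace ℝ (Fin 2) => (inner ℝ x e : ℝ)) hreq
  simp only [real_inner_smul_left, hNe, hRe] at hinner
  have hpos : (0:ℝ) < inner ℝ n e := by
    have he2 : (0:ℝ) < ‖e‖ ^ 2 := by positivity
    have hx : (inner ℝ n e : ℝ) = r₂ * ‖e‖ ^ 2 / r₁ := by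
      rw [eq_div_iff (ne_of_gt hr₁)]
      linear_combination hinner
    rw [hx]
    positivity
  -- decomposition
  set α : ℝ := (inner ℝ n d : ℝ) / ‖d‖ ^ 2 with hα
  set β : ℝ := (inner ℝ n e : ℝ) / ‖e‖ ^ 2 with hβ
  have hperp' : (inner ℝ e d : ℝ) = 0 := by rw [real_inner_comm]; exact hperp
  have hdn2 : (‖d‖:ℝ) ^ 2 ≠ 0 := by positivity
  have hen2 : (‖e‖:ℝ) ^ 2 ≠ 0 := by positivity
  have hw0 : n - (α • d + β • e) = 0 := by
    apply ortho2 hdz hez hperp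
    · simp only [inner_sub_left, inner_add_left, real_inner_smul_left,
        real_inner_self_eq_norm_sq, hperp', hα]
      field_simp
      ring
    · simp only [inner_sub_left, inner_add_left, real_inner_smul_left,
        real_inner_self_eq_norm_sq, hperp, hβ]
      field_simp
      ring
  have hdecomp : n = α • d + β • e := by rwa [sub_eq_zero] at hw0
  have hnorm : ‖n‖ ^ 2 = α ^ 2 * ‖d‖ ^ 2 + β ^ 2 * ‖e‖ ^ 2 := by
    rw [hdecomp, norm_add_sq_real, real_inner_smul_left, real_inner_smul_right, hperp]
    simp only [norm_smul, Real.norm_eq_abs, mul_pow, sq_abs, mul_zero]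
    ring
  have hcotpos : 0 < Real.cot ω := by
    rw [hcot]; positivity
  have hβe : (inner ℝ n e : ℝ) = β * ‖e‖ ^ 2 := by
    rw [hβ]; field_simp
  have hsq : (inner ℝ n e : ℝ) ^ 2 = (‖d‖ * ‖e‖ * Real.cot ω / 2) ^ 2 := by
    have hα2 : α = 1 / 2 := by rw [hα, hnd]; field_simp
    have hb2 : β ^ 2 * ‖e‖ ^ 2 = ‖d‖ ^ 2 * Real.cot ω ^ 2 / 4 := by
      rw [hα2] at hnorm
      rw [hn3] at hnorm
      linear_combination (-1) * hnorm
    rw [hβe]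
    linear_combination ‖e‖ ^ 2 * hb2
  have hne : (inner ℝ n e : ℝ) = ‖d‖ * ‖e‖ * Real.cot ω / 2 := by
    have htpos : (0:ℝ) < ‖d‖ * ‖e‖ * Real.cot ω / 2 := by positivity
    have hfac : ((inner ℝ n e : ℝ) - ‖d‖ * ‖e‖ * Real.cot ω / 2) *
        ((inner ℝ n e : ℝ) + ‖d‖ * ‖e‖ * Real.cot ω / 2) = 0 := by
      linear_combination hsq
    rcases mul_eq_zero.1 hfac with h | h
    · linarith
    · linarith
  exact ⟨hnd, hn3, hne⟩

open EuclideanGeometry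

set_option maxHeartbeats 1000000 in
/-- If `ABC` is right-angled at `A`, the B-Neuberg and C-Neuberg circles are
orthogonal: `n_b² + n_c² = N_bN_c²`. -/
theorem stmt_5 (A B C Nb Nc : EuclideanSpace ℝ (Fin 2))
    (hABC : AffineIndependent ℝ ![A, B, C])
    (a b c S ω nb nc : ℝ)
    (ha : a = dist B C) (hb : b = dist C A) (hc : c = dist A B)
    (hright : ∠ B A C = Real.pi / 2)
    (hS : S = b * c / 2)
    (hω : ω ∈ Set.Ioo 0 (Real.pi / 2))
    (htan : Real.tan ω = 4 * S / (a ^ 2 + b ^ 2 + c ^ 2))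
    (hnb : nb = (b / 2) * Real.sqrt (Real.cot ω ^ 2 - 3))
    (hnc : nc = (c / 2) * Real.sqrt (Real.cot ω ^ 2 - 3))
    (hNb : dist Nb C = dist Nb A ∧ ∠ C Nb A = 2 * ω ∧
      (affineSpan ℝ ({C, A} : Set (EuclideanSpace ℝ (Fin 2)))).SSameSide Nb B)
    (hNc : dist Nc A = dist Nc B ∧ ∠ A Nc B = 2 * ω ∧
      (affineSpan ℝ ({A, B} : Set (EuclideanSpace ℝ (Fin 2)))).SSameSide Nc C) :
    nb ^ 2 + nc ^ 2 = dist Nb Nc ^ 2 := by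
  have hAB : A ≠ B := by
    have := hABC.injective.ne (show (0 : Fin 3) ≠ 1 by decide)
    simpa using this
  have hCA : C ≠ A := by
    have := hABC.injective.ne (show (2 : Fin 3) ≠ 0 by decide)
    simpa using this
  have hb0 : 0 < b := by rw [hb]; exact dist_pos.2 hCA
  have hc0 : 0 < c := by rw [hc]; exact dist_pos.2 hAB
  obtain ⟨hω1, hω2⟩ := hω
  have hpipos := Real.pi_pos
  have hsin : 0 < Real.sin ω := Real.sin_pos_of_pos_of_lt_pi hω1 (by linarith)
  have hcos : 0 < Real.cos ω := Real.cos_pos_of_mem_Ioo ⟨by linarith, hω2⟩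
  have hsne : Real.sin ω ≠ 0 := ne_of_gt hsin
  have hcne : Real.cos ω ≠ 0 := ne_of_gt hcos
  -- right angle : inner ℝ product zero and Pythagoras
  have hperpBC : (inner ℝ (B -ᵥ A) (C -ᵥ A) : ℝ) = 0 :=
    (InnerProductGeometry.inner_eq_zero_iff_angle_eq_pi_div_two _ _).2 hright
  have hpy : a ^ 2 = b ^ 2 + c ^ 2 := by
    have hp := (dist_sq_eq_dist_sq_add_dist_sq_iff_angle_eq_pi_div_two B A C).2 hright
    rw [dist_comm B A] at hp
    rw [ha, hb, hc, pow_two, pow_two, pow_two]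
    linarith [hp]
  -- cotangent value
  have hcot : Real.cot ω = (b ^ 2 + c ^ 2) / (b * c) := by
    have ht : Real.tan ω = b * c / (b ^ 2 + c ^ 2) := by
      rw [htan, hS, hpy]
      field_simp
      ring
    rw [Real.tan_eq_sin_div_cos] at ht
    rw [Real.cot_eq_cos_div_sin]
    field_simp at ht ⊢
    linear_combination (-1) * ht
  have hKpos : 0 < Real.cot ω := by rw [Real.cot_eq_cos_div_sin]; positivity
  have hKbc : Real.cot ω * (b * c) = b ^ 2 + c ^ 2 := by
    rw [hcot]; field_simp
  -- Neuberg data for both circles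
  have HB := neuberg_data A C B Nb ω hsin hcos hCA hAB.symm
    (by rw [real_inner_comm]; exact hperpBC) hNb.1 hNb.2.1 hNb.2.2
  have HC := neuberg_data A B C Nc ω hsin hcos hAB.symm hCA
    hperpBC hNc.1.symm (by rw [angle_comm]; exact hNc.2.1)
    (by rw [Set.pair_comm]; exact hNc.2.2)
  set u := B -ᵥ A with hu
  set v := C -ᵥ A with hv
  set p := Nb -ᵥ A with hp
  set q := Nc -ᵥ A with hq
  have hvb : ‖v‖ = b := by rw [hv, hb, dist_eq_norm_vsub]
  have huc : ‖u‖ = c := by rw [hu, hc, dist_eq_norm_vsub (EuclideanSpace ℝ (Fin 2)) A B,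
    ← neg_vsub_eq_vsub_rev, norm_neg]
  rw [hvb, huc] at HB HC
  obtain ⟨hpv, hpn, hpu⟩ := HB
  obtain ⟨hqu, hqn, hqv⟩ := HC
  have huz : u ≠ 0 := vsub_ne_zero.2 hAB.symm
  have hvz : v ≠ 0 := vsub_ne_zero.2 hCA
  -- decomposition of p to compute inner ℝ p q
  have hb2 : (b:ℝ) ^ 2 ≠ 0 := by positivity
  have hc2 : (c:ℝ) ^ 2 ≠ 0 := by positivity
  have hperpvu : (inner ℝ v u : ℝ) = 0 := by rw [real_inner_comm]; exact hperpBC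
  have hw0 : p - ((1 / 2 : ℝ) • v + (b * Real.cot ω / (2 * c)) • u) = 0 := by
    apply ortho2 hvz huz hperpvu
    · rw [inner_sub_left, inner_add_left, real_inner_smul_left, real_inner_smul_left,
        real_inner_self_eq_norm_sq, hvb, hpv, hperpBC]
      ring
    · rw [inner_sub_left, inner_add_left, real_inner_smul_left, real_inner_smul_left,
        real_inner_self_eq_norm_sq, huc, hpu, hperpvu]
      field_simp
      ring
  have hdecomp : p = (1 / 2 : ℝ) • v + (b * Real.cot ω / (2 * c)) • u := by rwa [sub_eq_zero] at hw0
  have hvq : (inner ℝ v q : ℝ) = c * b * Real.cot ω / 2 := by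
    rw [real_inner_comm]; exact hqv
  have huq : (inner ℝ u q : ℝ) = c ^ 2 / 2 := by
    rw [real_inner_comm]; exact hqu
  have hpq : (inner ℝ p q : ℝ) = b * c * Real.cot ω / 2 := by
    rw [hdecomp, inner_add_left, real_inner_smul_left, real_inner_smul_left, hvq, huq]
    field_simp
    ring
  -- final computation
  have hdist : dist Nb Nc ^ 2 = ‖p‖ ^ 2 - 2 * inner ℝ p q + ‖q‖ ^ 2 := by
    rw [dist_eq_norm_vsub (EuclideanSpace ℝ (Fin 2)) Nb Nc,
      ← vsub_sub_vsub_cancel_right Nb Nc A, ← hp, ← hq, norm_sub_sq_real]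
  have hK3 : (0:ℝ) ≤ Real.cot ω ^ 2 - 3 := by
    rw [hcot]
    rw [div_pow, sub_nonneg, le_div_iff₀ (by positivity)]
    have h := sq_nonneg (b ^ 2 - c ^ 2)
    have hid : (b ^ 2 + c ^ 2) ^ 2 - 3 * (b * c) ^ 2 = (b ^ 2 - c ^ 2) ^ 2 + (b * c) ^ 2 := by
      ring
    linarith [sq_nonneg (b * c)]
  have hnb2 : nb ^ 2 = b ^ 2 * (Real.cot ω ^ 2 - 3) / 4 := by
    rw [hnb, mul_pow, Real.sq_sqrt hK3]
    ring
  have hnc2 : nc ^ 2 = c ^ 2 * (Real.cot ω ^ 2 - 3) / 4 := by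
    rw [hnc, mul_pow, Real.sq_sqrt hK3]
    ring
  rw [hdist, hpq, hpn, hqn, hnb2, hnc2]
  linear_combination hKbc
end

section
/- The A-Lucas and C-Lucas inner circles of a triangle ABC are externally tangent: the distance between their centers equals the sum of their radii, L_aL_c = l_a + l_c. Equivalently, with O the circumcenter, OL_a = R − l_a, OL_c = R − l_c, angle L_aOL_c = 2B, the identity (R−l_a)² + (R−l_c)² − 2(R−l_a)(R−l_c)cos 2B = (l_a + l_c)² holds, where l_a = Rbc/(bc+2aR) and l_c = Rab/(ab+2cR), using sin B = b/(2R). -/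
open EuclideanGeometry

/-- The A-Lucas and C-Lucas inner circles are externally tangent:
`dist L_a L_c = l_a + l_c`, where `l_a = Rbc/(bc+2aR)`, `l_c = Rab/(ab+2cR)` and
the centers lie on the segments `OA`, `OC` with `OL_a = R - l_a`, `OL_c = R - l_c`. -/
theorem stmt_7 (A B C O La Lc : EuclideanSpace ℝ (Fin 2))
    (hABC : AffineIndependent ℝ ![A, B, C])
    (a b c R la lc : ℝ)
    (ha : a = dist B C) (hb : b = dist C A) (hc : c = dist A B)
    (hR : 0 < R) (hO : dist O A = R ∧ dist O B = R ∧ dist O C = R)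
    (hla : la = R * b * c / (b * c + 2 * a * R))
    (hlc : lc = R * a * b / (a * b + 2 * c * R))
    (hLa : La ∈ segment ℝ O A ∧ dist O La = R - la)
    (hLc : Lc ∈ segment ℝ O C ∧ dist O Lc = R - lc) :
    dist La Lc = la + lc := by
  obtain ⟨hOA, hOB, hOC⟩ := hO
  have hinj := hABC.injective
  have hAB : A ≠ B := by
    intro h
    exact absurd (hinj (show ![A, B, C] 0 = ![A, B, C] 1 from h)) (by decide)
  have hBC : B ≠ C := by
    intro h
    exact absurd (hinj (show ![A, B, C] 1 = ![A, B, C] 2 from h)) (by decide)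
  have hCA : C ≠ A := by
    intro h
    exact absurd (hinj (show ![A, B, C] 2 = ![A, B, C] 0 from h)) (by decide)
  have hapos : 0 < a := ha ▸ dist_pos.mpr hBC
  have hbpos : 0 < b := hb ▸ dist_pos.mpr hCA
  have hcpos : 0 < c := hc ▸ dist_pos.mpr hAB
  have hDa : b * c + 2 * a * R ≠ 0 := by positivity
  have hDc : a * b + 2 * c * R ≠ 0 := by positivity
  have hla0 : 0 ≤ la := by rw [hla]; positivity
  have hlc0 : 0 ≤ lc := by rw [hlc]; positivity
  -- extract convex combination data
  obtain ⟨⟨p, q, hp, hq, hpq, hEq⟩, hdLa⟩ := hLa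
  obtain ⟨⟨p', s, hp', hs, hpq', hEq'⟩, hdLc⟩ := hLc
  have hp1 : p = 1 - q := by linarith
  have hp1' : p' = 1 - s := by linarith
  rw [hp1] at hEq; rw [hp1'] at hEq'
  have hLaO : La - O = q • (A - O) := by rw [← hEq]; module
  have hLcO : Lc - O = s • (C - O) := by rw [← hEq']; module
  have hnA : ‖A - O‖ = R := by rw [← dist_eq_norm, dist_comm]; exact hOA
  have hnC : ‖C - O‖ = R := by rw [← dist_eq_norm, dist_comm]; exact hOC
  have hqR : q * R = R - la := by
    have : dist O La = q * R := by
      rw [dist_comm, dist_eq_norm, hLaO, norm_smul, Real.norm_eq_abs,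
        abs_of_nonneg hq, hnA]
    linarith [hdLa, this]
  have hsR : s * R = R - lc := by
    have : dist O Lc = s * R := by
      rw [dist_comm, dist_eq_norm, hLcO, norm_smul, Real.norm_eq_abs,
        abs_of_nonneg hs, hnC]
    linarith [hdLc, this]
  -- inner product of A-O and C-O
  have hinner : inner ℝ (A - O) (C - O) = R ^ 2 - b ^ 2 / 2 := by
    have hb2 : b ^ 2 = ‖(A - O) - (C - O)‖ ^ 2 := by
      rw [hb, dist_comm, dist_eq_norm]
      congr 1
      abel_nf
    rw [@norm_sub_sq_real, hnA, hnC] at hb2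
    linarith
  -- squared distance between the centers
  have hd2 : dist La Lc ^ 2 =
      q ^ 2 * R ^ 2 + s ^ 2 * R ^ 2 - 2 * (q * s) * (R ^ 2 - b ^ 2 / 2) := by
    have : dist La Lc = ‖q • (A - O) - s • (C - O)‖ := by
      rw [dist_eq_norm, ← hLaO, ← hLcO]
      congr 1
      abel_nf
    rw [this, @norm_sub_sq_real, real_inner_smul_left, real_inner_smul_right,
      norm_smul, norm_smul, Real.norm_eq_abs, Real.norm_eq_abs,
      abs_of_nonneg hq, abs_of_nonneg hs, hnA, hnC, hinner]
    ring
  -- key algebraic identity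
  have hkey : (R - la) * (R - lc) * b ^ 2 = 4 * la * lc * R ^ 2 := by
    rw [hla, hlc]
    field_simp
    ring
  have hqsR : q * s * R ^ 2 = (R - la) * (R - lc) := by
    linear_combination (s * R) * hqR + (R - la) * hsR
  have hR2 : (R : ℝ) ^ 2 ≠ 0 := by positivity
  have hqsb : q * s * b ^ 2 = 4 * la * lc := by
    have h1 : (q * s * b ^ 2) * R ^ 2 = (4 * la * lc) * R ^ 2 := by
      calc (q * s * b ^ 2) * R ^ 2 = (q * s * R ^ 2) * b ^ 2 := by ring
        _ = (R - la) * (R - lc) * b ^ 2 := by rw [hqsR]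
        _ = (4 * la * lc) * R ^ 2 := by rw [hkey]
    exact mul_right_cancel₀ hR2 h1
  have hfinal : dist La Lc ^ 2 = (la + lc) ^ 2 := by
    have e1 : q ^ 2 * R ^ 2 = (R - la) ^ 2 := by linear_combination (q * R + (R - la)) * hqR
    have e2 : s ^ 2 * R ^ 2 = (R - lc) ^ 2 := by linear_combination (s * R + (R - lc)) * hsR
    rw [hd2, e1, e2]
    have : 2 * (q * s) * (R ^ 2 - b ^ 2 / 2) =
        2 * ((R - la) * (R - lc)) - 4 * la * lc := by
      have : 2 * (q * s) * (R ^ 2 - b ^ 2 / 2) =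
          2 * (q * s * R ^ 2) - q * s * b ^ 2 := by ring
      rw [this, hqsR, hqsb]
    rw [this]
    ring
  calc dist La Lc = Real.sqrt (dist La Lc ^ 2) := (Real.sqrt_sq dist_nonneg).symm
    _ = Real.sqrt ((la + lc) ^ 2) := by rw [hfinal]
    _ = la + lc := Real.sqrt_sq (by linarith)
end

section
/- The radius of the radical circle of the three excircles of a triangle ABC equals (1/2)√(r² + p²), where r is the inradius and p the semiperimeter. Equivalently, the common tangent length from the Spieker point S (incenter of the medial triangle) to each excircle equals (1/2)√(r² + p²). -/
set_option maxHeartbeats 1000000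

lemma excircle_aux (u v w1 w2 : EuclideanSpace ℝ (Fin 2)) (a b c S : ℝ)
    (hk : 0 < b + c - a) (hs : 0 < a + b + c)
    (hHeron : 16 * S ^ 2 =
      2 * a ^ 2 * b ^ 2 + 2 * b ^ 2 * c ^ 2 + 2 * c ^ 2 * a ^ 2 - a ^ 4 - b ^ 4 - c ^ 4)
    (hnu : ‖u‖ = c) (hnv : ‖v‖ = b) (hnuv : ‖u - v‖ = a)
    (hX : (b + c - a) • w2 = b • u + c • v)
    (hSp : (2 * (a + b + c)) • w1 = (c + a) • u + (a + b) • v) :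
    ‖w1 - w2‖ ^ 2 = 4 * S ^ 2 / (b + c - a) ^ 2 + S ^ 2 / (a + b + c) ^ 2
      + (a + b + c) ^ 2 / 16 := by
  have hk' : (b + c - a) ≠ 0 := ne_of_gt hk
  have hs' : (a + b + c) ≠ 0 := ne_of_gt hs
  have huu : (inner ℝ u u : ℝ) = c ^ 2 := by rw [real_inner_self_eq_norm_sq, hnu]
  have hvv : (inner ℝ v v : ℝ) = b ^ 2 := by rw [real_inner_self_eq_norm_sq, hnv]
  have huv : (inner ℝ u v : ℝ) = (c ^ 2 + b ^ 2 - a ^ 2) / 2 := by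
    have h := norm_sub_sq_real u v
    rw [hnu, hnv, hnuv] at h
    linarith
  have hvu : (inner ℝ v u : ℝ) = (c ^ 2 + b ^ 2 - a ^ 2) / 2 := by
    rw [real_inner_comm]; exact huv
  have hW : (2 * (a + b + c) * (b + c - a)) • (w1 - w2)
      = ((b + c - a) * (c + a) - 2 * (a + b + c) * b) • u
        + ((b + c - a) * (a + b) - 2 * (a + b + c) * c) • v := by
    linear_combination (norm := module) (b + c - a) • hSp - (2 * (a + b + c)) • hX
  have h1 : (2 * (a + b + c) * (b + c - a)) ^ 2 * ‖w1 - w2‖ ^ 2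
      = (inner ℝ ((2 * (a + b + c) * (b + c - a)) • (w1 - w2))
          ((2 * (a + b + c) * (b + c - a)) • (w1 - w2)) : ℝ) := by
    rw [real_inner_smul_left, real_inner_smul_right, real_inner_self_eq_norm_sq]; ring
  rw [hW] at h1
  simp only [inner_add_left, inner_add_right, real_inner_smul_left, real_inner_smul_right,
    huu, hvv, huv, hvu] at h1
  have hS2 : S ^ 2 = (2 * a ^ 2 * b ^ 2 + 2 * b ^ 2 * c ^ 2 + 2 * c ^ 2 * a ^ 2
      - a ^ 4 - b ^ 4 - c ^ 4) / 16 := by linarith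
  apply mul_left_cancel₀ (show ((2 * (a + b + c) * (b + c - a)) ^ 2 : ℝ) ≠ 0 by positivity)
  rw [h1, hS2]
  field_simp
  ring

/-- The radius of the radical circle of the three excircles equals
`(1/2)√(r² + p²)`: the tangent length from the Spieker point `Sp` to each
excircle is `(1/2)√(r² + p²)`.  Excenters and the Spieker point are given by
their barycentric coordinates, `S` is the area (Heron), `p` the semiperimeter,
`r = S/p` the inradius and `r_a = S/(p-a)` etc. the exradii. -/
theorem stmt_8 (A B C Sp Ia Ib Ic : EuclideanSpace ℝ (Fin 2))
    (hABC : AffineIndependent ℝ ![A, B, C])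
    (a b c p S r ra rb rc : ℝ)
    (ha : a = dist B C) (hb : b = dist C A) (hc : c = dist A B)
    (hp : p = (a + b + c) / 2)
    (hS : 0 < S)
    (hHeron : 16 * S ^ 2 =
      2 * a ^ 2 * b ^ 2 + 2 * b ^ 2 * c ^ 2 + 2 * c ^ 2 * a ^ 2 - a ^ 4 - b ^ 4 - c ^ 4)
    (hr : r = S / p) (hra : ra = S / (p - a)) (hrb : rb = S / (p - b))
    (hrc : rc = S / (p - c))
    (hIa : (b + c - a) • (Ia -ᵥ A) = b • (B -ᵥ A) + c • (C -ᵥ A))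
    (hIb : (a + c - b) • (Ib -ᵥ B) = a • (A -ᵥ B) + c • (C -ᵥ B))
    (hIc : (a + b - c) • (Ic -ᵥ C) = a • (A -ᵥ C) + b • (B -ᵥ C))
    (hSp : (2 * (a + b + c)) • (Sp -ᵥ A) = (c + a) • (B -ᵥ A) + (a + b) • (C -ᵥ A)) :
    Real.sqrt (dist Sp Ia ^ 2 - ra ^ 2) = (1 / 2) * Real.sqrt (r ^ 2 + p ^ 2) ∧
    Real.sqrt (dist Sp Ib ^ 2 - rb ^ 2) = (1 / 2) * Real.sqrt (r ^ 2 + p ^ 2) ∧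
    Real.sqrt (dist Sp Ic ^ 2 - rc ^ 2) = (1 / 2) * Real.sqrt (r ^ 2 + p ^ 2) := by
  have hinj := hABC.injective
  have hAB : A ≠ B := fun h => absurd (hinj (show ![A,B,C] 0 = ![A,B,C] 1 by simp [h]))
    (by decide)
  have hCA : C ≠ A := fun h => absurd (hinj (show ![A,B,C] 2 = ![A,B,C] 0 by simp [h]))
    (by decide)
  have hBC : B ≠ C := fun h => absurd (hinj (show ![A,B,C] 1 = ![A,B,C] 2 by simp [h]))
    (by decide)
  have ha0 : 0 < a := ha ▸ dist_pos.2 hBC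
  have hb0 : 0 < b := hb ▸ dist_pos.2 hCA
  have hc0 : 0 < c := hc ▸ dist_pos.2 hAB
  have hs : 0 < a + b + c := by linarith
  have hSS : 0 < S * S := mul_pos hS hS
  have hfact : 16 * S ^ 2 = (a + b + c) * ((b + c - a) * ((a + c - b) * (a + b - c))) := by
    linear_combination hHeron
  have hk : 0 < b + c - a := by
    by_contra h
    push_neg at h
    have hm : 0 < a + c - b := by linarith
    have hn : 0 < a + b - c := by linarith
    nlinarith [mul_pos hs (mul_pos hm hn)]
  have hm : 0 < a + c - b := by
    by_contra h
    push_neg at h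
    have hk2 : 0 < b + c - a := by linarith
    have hn : 0 < a + b - c := by linarith
    nlinarith [mul_pos hs (mul_pos hk2 hn)]
  have hn : 0 < a + b - c := by
    by_contra h
    push_neg at h
    have hk2 : 0 < b + c - a := by linarith
    have hm2 : 0 < a + c - b := by linarith
    nlinarith [mul_pos hs (mul_pos hk2 hm2)]
  -- side-length norms
  have nBA : ‖B -ᵥ A‖ = c := by
    rw [show B -ᵥ A = B - A from rfl, ← dist_eq_norm, dist_comm, ← hc]
  have nCA : ‖C -ᵥ A‖ = b := by
    rw [show C -ᵥ A = C - A from rfl, ← dist_eq_norm, ← hb]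
  have nAB : ‖A -ᵥ B‖ = c := by
    rw [show A -ᵥ B = A - B from rfl, ← dist_eq_norm, ← hc]
  have nCB : ‖C -ᵥ B‖ = a := by
    rw [show C -ᵥ B = C - B from rfl, ← dist_eq_norm, dist_comm, ← ha]
  have nAC : ‖A -ᵥ C‖ = b := by
    rw [show A -ᵥ C = A - C from rfl, ← dist_eq_norm, dist_comm, ← hb]
  have nBCv : ‖B -ᵥ C‖ = a := by
    rw [show B -ᵥ C = B - C from rfl, ← dist_eq_norm, ← ha]
  have nBA_CA : ‖(B -ᵥ A) - (C -ᵥ A)‖ = a := by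
    rw [show (B -ᵥ A) - (C -ᵥ A) = B - C by
      show (B - A) - (C - A) = B - C; abel, ← dist_eq_norm, ← ha]
  have nAB_CB : ‖(A -ᵥ B) - (C -ᵥ B)‖ = b := by
    rw [show (A -ᵥ B) - (C -ᵥ B) = A - C by
      show (A - B) - (C - B) = A - C; abel, ← dist_eq_norm, dist_comm, ← hb]
  have nAC_BC : ‖(A -ᵥ C) - (B -ᵥ C)‖ = c := by
    rw [show (A -ᵥ C) - (B -ᵥ C) = A - B by
      show (A - C) - (B - C) = A - B; abel, ← dist_eq_norm, ← hc]
  -- Spieker relative to B and C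
  have hSpB : (2 * (b + a + c)) • (Sp -ᵥ B) = (c + b) • (A -ᵥ B) + (b + a) • (C -ᵥ B) := by
    have h : (2 * (a + b + c)) • (Sp - A) = (c + a) • (B - A) + (a + b) • (C - A) := hSp
    show (2 * (b + a + c)) • (Sp - B) = (c + b) • (A - B) + (b + a) • (C - B)
    linear_combination (norm := module) h
  have hSpC : (2 * (c + a + b)) • (Sp -ᵥ C) = (b + c) • (A -ᵥ C) + (c + a) • (B -ᵥ C) := by
    have h : (2 * (a + b + c)) • (Sp - A) = (c + a) • (B - A) + (a + b) • (C - A) := hSp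
    show (2 * (c + a + b)) • (Sp - C) = (b + c) • (A - C) + (c + a) • (B - C)
    linear_combination (norm := module) h
  -- distances squared
  have dIa : dist Sp Ia ^ 2 = 4 * S ^ 2 / (b + c - a) ^ 2 + S ^ 2 / (a + b + c) ^ 2
      + (a + b + c) ^ 2 / 16 := by
    have h := excircle_aux (B -ᵥ A) (C -ᵥ A) (Sp -ᵥ A) (Ia -ᵥ A) a b c S hk hs hHeron
      nBA nCA nBA_CA hIa hSp
    rw [dist_eq_norm, show Sp - Ia = (Sp -ᵥ A) - (Ia -ᵥ A) by
      show Sp - Ia = (Sp - A) - (Ia - A); abel]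
    exact h
  have dIb : dist Sp Ib ^ 2 = 4 * S ^ 2 / (a + c - b) ^ 2 + S ^ 2 / (b + a + c) ^ 2
      + (b + a + c) ^ 2 / 16 := by
    have h := excircle_aux (A -ᵥ B) (C -ᵥ B) (Sp -ᵥ B) (Ib -ᵥ B) b a c S
      (by linarith) (by linarith)
      (by linear_combination hHeron) nAB nCB nAB_CB hIb hSpB
    rw [dist_eq_norm, show Sp - Ib = (Sp -ᵥ B) - (Ib -ᵥ B) by
      show Sp - Ib = (Sp - B) - (Ib - B); abel]
    exact h
  have dIc : dist Sp Ic ^ 2 = 4 * S ^ 2 / (a + b - c) ^ 2 + S ^ 2 / (c + a + b) ^ 2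
      + (c + a + b) ^ 2 / 16 := by
    have h := excircle_aux (A -ᵥ C) (B -ᵥ C) (Sp -ᵥ C) (Ic -ᵥ C) c a b S
      (by linarith) (by linarith)
      (by linear_combination hHeron) nAC nBCv nAC_BC hIc hSpC
    rw [dist_eq_norm, show Sp - Ic = (Sp -ᵥ C) - (Ic -ᵥ C) by
      show Sp - Ic = (Sp - C) - (Ic - C); abel]
    exact h
  have hk' : (b + c - a) ≠ 0 := ne_of_gt hk
  have hm' : (a + c - b) ≠ 0 := ne_of_gt hm
  have hn' : (a + b - c) ≠ 0 := ne_of_gt hn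
  have hs' : (a + b + c) ≠ 0 := ne_of_gt hs
  have e3 : r ^ 2 + p ^ 2 = 4 * S ^ 2 / (a + b + c) ^ 2 + (a + b + c) ^ 2 / 4 := by
    rw [hr, hp]
    field_simp
    ring
  have era : ra ^ 2 = 4 * S ^ 2 / (b + c - a) ^ 2 := by
    rw [hra, show p - a = (b + c - a) / 2 by rw [hp]; ring]
    field_simp
    ring
  have erb : rb ^ 2 = 4 * S ^ 2 / (a + c - b) ^ 2 := by
    rw [hrb, show p - b = (a + c - b) / 2 by rw [hp]; ring]
    field_simp
    ring
  have erc : rc ^ 2 = 4 * S ^ 2 / (a + b - c) ^ 2 := by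
    rw [hrc, show p - c = (a + b - c) / 2 by rw [hp]; ring]
    field_simp
    ring
  have hsqrt : ∀ y : ℝ, 0 ≤ y → Real.sqrt (y / 4) = 1 / 2 * Real.sqrt y := by
    intro y hy
    rw [show y / 4 = (1 / 2 : ℝ) ^ 2 * y by ring, Real.sqrt_mul (by positivity),
      Real.sqrt_sq (by norm_num)]
  have hy : (0 : ℝ) ≤ r ^ 2 + p ^ 2 := by positivity
  refine ⟨?_, ?_, ?_⟩
  · rw [show dist Sp Ia ^ 2 - ra ^ 2 = (r ^ 2 + p ^ 2) / 4 by rw [dIa, era, e3]; ring]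
    exact hsqrt _ hy
  · rw [show dist Sp Ib ^ 2 - rb ^ 2 = (r ^ 2 + p ^ 2) / 4 by rw [dIb, erb, e3]; ring]
    exact hsqrt _ hy
  · rw [show dist Sp Ic ^ 2 - rc ^ 2 = (r ^ 2 + p ^ 2) / 4 by rw [dIc, erc, e3]; ring]
    exact hsqrt _ hy
end

section
/- For a triangle ABC with orthocenter H, circumcenter O, circumradius R, and a circle centered at H intersecting the line B₁C₁ (the midline parallel to BC, with B₁, C₁ the midpoints of CA, AB) in points P₁, Q₁, the distances from A to P₁ and Q₁ satisfy AQ₁² = R_H² + (1/2)(R² − OH²), where R_H is the radius of the circle centered at H. Consequently, if the circle centered at H meets all three midlines, the six intersection points are at equal distance from the respective opposite vertices: AP₁ = AQ₁ = BP₂ = BQ₂ = CP₃ = CQ₃. -/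
open RealInnerProductSpace

lemma collinear_param' {E : Type*} [NormedAddCommGroup E] [NormedSpace ℝ E]
    {p q x : E} (hpq : p ≠ q) (h : Collinear ℝ ({p, q, x} : Set E)) :
    ∃ s : ℝ, x = p + s • (q - p) := by
  obtain ⟨v, hv⟩ := (collinear_iff_of_mem (show p ∈ ({p, q, x} : Set E) by simp)).mp h
  obtain ⟨tq, hq⟩ := hv q (by simp)
  obtain ⟨tx, hx⟩ := hv x (by simp)
  have htq : tq ≠ 0 := by
    rintro rfl
    simp at hq
    exact hpq hq.symm
  refine ⟨tx / tq, ?_⟩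
  have hqp : q - p = tq • v := by simp [hq, vadd_eq_add]
  rw [hqp, smul_smul, div_mul_cancel₀ _ htq]
  simp [hx, vadd_eq_add, add_comm]

lemma key' {E : Type*} [NormedAddCommGroup E] [InnerProductSpace ℝ E]
    (a b c x : E) (s R : ℝ)
    (hx : x = (2⁻¹ : ℝ) • (c + a) + s • ((2⁻¹ : ℝ) • (a + b) - (2⁻¹ : ℝ) • (c + a)))
    (ha : ‖a‖ = R) (hb : ‖b‖ = R) (hc : ‖c‖ = R) :
    ‖x - a‖ ^ 2 = ‖x - (a + b + c)‖ ^ 2 + (R ^ 2 - ‖a + b + c‖ ^ 2) / 2 := by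
  have ha2 : inner ℝ a a = R ^ 2 := by rw [real_inner_self_eq_norm_sq, ha]
  have hb2 : inner ℝ b b = R ^ 2 := by rw [real_inner_self_eq_norm_sq, hb]
  have hc2 : inner ℝ c c = R ^ 2 := by rw [real_inner_self_eq_norm_sq, hc]
  have hab := real_inner_comm a b
  have hac := real_inner_comm a c
  have hbc := real_inner_comm b c
  subst hx
  simp only [← real_inner_self_eq_norm_sq, inner_sub_left, inner_sub_right,
    inner_add_left, inner_add_right, inner_smul_left, inner_smul_right,
    RCLike.conj_to_real]
  simp only [hab, hac, hbc]
  linear_combination (1/2 : ℝ) * ha2 + (s - 1/2) * hb2 + (1/2 - s) * hc2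

lemma main_key' (A B C O H X : EuclideanSpace ℝ (Fin 2)) (R RH : ℝ)
    (hOA : dist O A = R) (hOB : dist O B = R) (hOC : dist O C = R)
    (hH : H - O = (A - O) + (B - O) + (C - O))
    (hBC : B ≠ C)
    (hcol : Collinear ℝ ({midpoint ℝ C A, midpoint ℝ A B, X} :
      Set (EuclideanSpace ℝ (Fin 2))))
    (hX : dist H X = RH) :
    dist A X ^ 2 = RH ^ 2 + (R ^ 2 - dist O H ^ 2) / 2 := by
  have hm : midpoint ℝ C A ≠ midpoint ℝ A B := by
    intro h
    rw [midpoint_eq_midpoint_iff_vsub_eq_vsub] at h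
    exact hBC (vsub_left_injective A h).symm
  obtain ⟨s, hs⟩ := collinear_param' hm hcol
  have hx : X - O = (2⁻¹ : ℝ) • ((C - O) + (A - O)) +
      s • ((2⁻¹ : ℝ) • ((A - O) + (B - O)) - (2⁻¹ : ℝ) • ((C - O) + (A - O))) := by
    rw [hs, midpoint_eq_smul_add, midpoint_eq_smul_add,
      show ((⅟2 : ℝ)) = (2⁻¹ : ℝ) by norm_num]
    module
  have hkey := key' (A - O) (B - O) (C - O) (X - O) s R hx
    (by rw [← dist_eq_norm, dist_comm]; exact hOA)
    (by rw [← dist_eq_norm, dist_comm]; exact hOB)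
    (by rw [← dist_eq_norm, dist_comm]; exact hOC)
  have e1 : X - O - (A - O) = X - A := by abel
  have e2 : (A - O) + (B - O) + (C - O) = H - O := hH.symm
  rw [e1, e2] at hkey
  have e3 : X - O - (H - O) = X - H := by abel
  rw [e3] at hkey
  rw [show dist A X = ‖X - A‖ by rw [dist_comm, dist_eq_norm],
    show dist O H = ‖H - O‖ by rw [dist_comm, dist_eq_norm], hkey,
    ← hX, dist_eq_norm, show ‖H - X‖ = ‖X - H‖ from norm_sub_rev _ _]

/-- A circle centered at the orthocenter `H` with radius `R_H` meets the midline
`B₁C₁` in `P₁, Q₁` (and the other midlines in `P₂, Q₂, P₃, Q₃`); then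
`AQ₁² = R_H² + (R² − OH²)/2` and the six points are equidistant from the
respective opposite vertices: `AP₁ = AQ₁ = BP₂ = BQ₂ = CP₃ = CQ₃`. -/
theorem stmt_9 (A B C O H : EuclideanSpace ℝ (Fin 2))
    (P₁ Q₁ P₂ Q₂ P₃ Q₃ : EuclideanSpace ℝ (Fin 2))
    (hABC : AffineIndependent ℝ ![A, B, C])
    (R RH : ℝ) (hR : 0 < R)
    (hO : dist O A = R ∧ dist O B = R ∧ dist O C = R)
    (hH : H -ᵥ O = (A -ᵥ O) + (B -ᵥ O) + (C -ᵥ O))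
    (hP₁ : Collinear ℝ ({midpoint ℝ C A, midpoint ℝ A B, P₁} :
      Set (EuclideanSpace ℝ (Fin 2))) ∧ dist H P₁ = RH)
    (hQ₁ : Collinear ℝ ({midpoint ℝ C A, midpoint ℝ A B, Q₁} :
      Set (EuclideanSpace ℝ (Fin 2))) ∧ dist H Q₁ = RH)
    (hP₂ : Collinear ℝ ({midpoint ℝ A B, midpoint ℝ B C, P₂} :
      Set (EuclideanSpace ℝ (Fin 2))) ∧ dist H P₂ = RH)
    (hQ₂ : Collinear ℝ ({midpoint ℝ A B, midpoint ℝ B C, Q₂} :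
      Set (EuclideanSpace ℝ (Fin 2))) ∧ dist H Q₂ = RH)
    (hP₃ : Collinear ℝ ({midpoint ℝ B C, midpoint ℝ C A, P₃} :
      Set (EuclideanSpace ℝ (Fin 2))) ∧ dist H P₃ = RH)
    (hQ₃ : Collinear ℝ ({midpoint ℝ B C, midpoint ℝ C A, Q₃} :
      Set (EuclideanSpace ℝ (Fin 2))) ∧ dist H Q₃ = RH) :
    dist A Q₁ ^ 2 = RH ^ 2 + (1 / 2) * (R ^ 2 - dist O H ^ 2) ∧
    dist A P₁ = dist A Q₁ ∧ dist A Q₁ = dist B P₂ ∧ dist B P₂ = dist B Q₂ ∧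
    dist B Q₂ = dist C P₃ ∧ dist C P₃ = dist C Q₃ := by
  obtain ⟨hOA, hOB, hOC⟩ := hO
  have hH' : H - O = (A - O) + (B - O) + (C - O) := hH
  have hH'' : H - O = (B - O) + (C - O) + (A - O) := by rw [hH']; abel
  have hH''' : H - O = (C - O) + (A - O) + (B - O) := by rw [hH']; abel
  have hAB : A ≠ B := by
    have := hABC.injective.ne (show (0 : Fin 3) ≠ 1 by decide)
    simpa using this
  have hBC : B ≠ C := by
    have := hABC.injective.ne (show (1 : Fin 3) ≠ 2 by decide)
    simpa using this
  have hCA : C ≠ A := by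
    have := hABC.injective.ne (show (2 : Fin 3) ≠ 0 by decide)
    simpa using this
  have k1 := main_key' A B C O H P₁ R RH hOA hOB hOC hH' hBC hP₁.1 hP₁.2
  have k2 := main_key' A B C O H Q₁ R RH hOA hOB hOC hH' hBC hQ₁.1 hQ₁.2
  have k3 := main_key' B C A O H P₂ R RH hOB hOC hOA hH'' hCA hP₂.1 hP₂.2
  have k4 := main_key' B C A O H Q₂ R RH hOB hOC hOA hH'' hCA hQ₂.1 hQ₂.2
  have k5 := main_key' C A B O H P₃ R RH hOC hOA hOB hH''' hAB hP₃.1 hP₃.2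
  have k6 := main_key' C A B O H Q₃ R RH hOC hOA hOB hH''' hAB hQ₃.1 hQ₃.2
  have sq_eq : ∀ x y : ℝ, 0 ≤ x → 0 ≤ y → x ^ 2 = y ^ 2 → x = y := by
    intro x y hx hy h
    nlinarith
  refine ⟨by rw [k2]; ring, ?_, ?_, ?_, ?_, ?_⟩
  · exact sq_eq _ _ dist_nonneg dist_nonneg (by rw [k1, k2])
  · exact sq_eq _ _ dist_nonneg dist_nonneg (by rw [k2, k3])
  · exact sq_eq _ _ dist_nonneg dist_nonneg (by rw [k3, k4])
  · exact sq_eq _ _ dist_nonneg dist_nonneg (by rw [k4, k5])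
  · exact sq_eq _ _ dist_nonneg dist_nonneg (by rw [k5, k6])
end

section
/- The circles centered at the midpoints M₁, M₂, M₃ of the sides of triangle ABC passing through the orthocenter H intersect the sides BC, CA, AB in six points all equidistant from the circumcenter O, with common distance R₂ satisfying R₂² = 5R² − (1/2)(a² + b² + c²) (the second Droz-Farny circle). -/
open RealInnerProductSpace

lemma dfAux {E : Type*} [NormedAddCommGroup E] [InnerProductSpace ℝ E]
    (u v w x : E) (R s : ℝ)
    (hu : ‖u‖ = R) (hv : ‖v‖ = R) (hw : ‖w‖ = R)
    (hx : x - (2:ℝ)⁻¹ • (v + w) = s • (w - v))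
    (hMX : ‖x - (2:ℝ)⁻¹ • (v + w)‖ = ‖u + (2:ℝ)⁻¹ • (v + w)‖) :
    ‖x‖ ^ 2 = 5 * R ^ 2 - (1/2) * (‖w - v‖ ^ 2 + ‖u - w‖ ^ 2 + ‖v - u‖ ^ 2) := by
  set m : E := (2:ℝ)⁻¹ • (v + w) with hm
  have huu : ⟪u, u⟫ = R ^ 2 := by rw [real_inner_self_eq_norm_sq, hu]
  have hvv : ⟪v, v⟫ = R ^ 2 := by rw [real_inner_self_eq_norm_sq, hv]
  have hww : ⟪w, w⟫ = R ^ 2 := by rw [real_inner_self_eq_norm_sq, hw]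
  have h0 : ⟪x - m, m⟫ = 0 := by
    rw [hx, hm]
    simp only [real_inner_smul_left, real_inner_smul_right]
    simp only [inner_sub_left, inner_add_right]
    rw [real_inner_comm w v, hvv, hww]; ring
  have hxs : ‖x‖ ^ 2 = ‖x - m‖ ^ 2 + 2 * ⟪x - m, m⟫ + ‖m‖ ^ 2 := by
    have h := norm_add_sq_real (x - m) m
    rwa [sub_add_cancel] at h
  have hum : ‖u + m‖ ^ 2 = ‖u‖ ^ 2 + 2 * ⟪u, m⟫ + ‖m‖ ^ 2 := norm_add_sq_real _ _
  have hmm : ‖m‖ ^ 2 = (2:ℝ)⁻¹ * (R ^ 2 + ⟪v, w⟫) := by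
    rw [← real_inner_self_eq_norm_sq, hm]
    simp only [real_inner_smul_left, real_inner_smul_right]
    simp only [inner_add_left, inner_add_right]
    rw [real_inner_comm w v, hvv, hww]; ring
  have hum2 : ⟪u, m⟫ = (2:ℝ)⁻¹ * (⟪u, v⟫ + ⟪u, w⟫) := by
    rw [hm]; simp only [real_inner_smul_right, inner_add_right]
  have hA : ‖w - v‖ ^ 2 = 2 * R ^ 2 - 2 * ⟪v, w⟫ := by
    rw [norm_sub_sq_real, real_inner_comm w v]
    rw [← real_inner_self_eq_norm_sq, ← real_inner_self_eq_norm_sq, hvv, hww]; ring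
  have hB : ‖u - w‖ ^ 2 = 2 * R ^ 2 - 2 * ⟪u, w⟫ := by
    rw [norm_sub_sq_real, ← real_inner_self_eq_norm_sq, ← real_inner_self_eq_norm_sq, huu, hww]
    ring
  have hC : ‖v - u‖ ^ 2 = 2 * R ^ 2 - 2 * ⟪u, v⟫ := by
    rw [norm_sub_sq_real, real_inner_comm v u,
      ← real_inner_self_eq_norm_sq, ← real_inner_self_eq_norm_sq, huu, hvv]; ring
  have hsq : ‖x - m‖ ^ 2 = ‖u + m‖ ^ 2 := by rw [hMX]
  rw [hxs, h0, hsq, hum, hum2, hmm, hA, hB, hC, hu]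
  ring

lemma dfKey (A B C O H X : EuclideanSpace ℝ (Fin 2)) (hBC : B ≠ C) (R : ℝ)
    (hOA : dist O A = R) (hOB : dist O B = R) (hOC : dist O C = R)
    (hH : H -ᵥ O = (A -ᵥ O) + (B -ᵥ O) + (C -ᵥ O))
    (hcol : Collinear ℝ ({B, C, X} : Set (EuclideanSpace ℝ (Fin 2))))
    (hd : dist (midpoint ℝ B C) X = dist (midpoint ℝ B C) H) :
    dist O X ^ 2 =
      5 * R ^ 2 - (1/2) * (dist B C ^ 2 + dist C A ^ 2 + dist A B ^ 2) := by
  -- vectors from O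
  set u : EuclideanSpace ℝ (Fin 2) := A - O with hu
  set v : EuclideanSpace ℝ (Fin 2) := B - O with hv
  set w : EuclideanSpace ℝ (Fin 2) := C - O with hw
  set x : EuclideanSpace ℝ (Fin 2) := X - O with hx
  have hmid : midpoint ℝ B C = (2:ℝ)⁻¹ • (B + C) := by
    rw [midpoint_eq_smul_add, invOf_eq_inv]
  -- collinearity gives a parameter s
  rw [collinear_iff_of_mem (Set.mem_insert B {C, X})] at hcol
  obtain ⟨d, hd'⟩ := hcol
  obtain ⟨r₁, hC⟩ := hd' C (by simp)
  obtain ⟨r₂, hX⟩ := hd' X (by simp)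
  have hr₁ : r₁ ≠ 0 := by
    intro h; apply hBC; rw [hC, h, zero_smul, zero_vadd]
  have hCB : C - B = r₁ • d := by rw [hC]; simp [vadd_eq_add]
  have hXB : X - B = r₂ • d := by rw [hX]; simp [vadd_eq_add]
  have hsx : x - (2:ℝ)⁻¹ • (v + w) = (r₂ / r₁ - 2⁻¹) • (w - v) := by
    have hwv : w - v = r₁ • d := by rw [hv, hw]; rw [show C - O - (B - O) = C - B by abel, hCB]
    have hxv : x - v = r₂ • d := by rw [hv, hx]; rw [show X - O - (B - O) = X - B by abel, hXB]
    have : x - (2:ℝ)⁻¹ • (v + w) = (x - v) - (2:ℝ)⁻¹ • (w - v) := by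
      module
    rw [this, hxv, hwv, smul_smul, smul_smul, ← sub_smul]
    congr 1
    field_simp
  have hnu : ‖u‖ = R := by rw [hu, ← dist_eq_norm, dist_comm, hOA]
  have hnv : ‖v‖ = R := by rw [hv, ← dist_eq_norm, dist_comm, hOB]
  have hnw : ‖w‖ = R := by rw [hw, ← dist_eq_norm, dist_comm, hOC]
  have hMX : ‖x - (2:ℝ)⁻¹ • (v + w)‖ = ‖u + (2:ℝ)⁻¹ • (v + w)‖ := by
    have e1 : x - (2:ℝ)⁻¹ • (v + w) = X - midpoint ℝ B C := by
      rw [hmid, hx, hv, hw]; module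
    have e2 : u + (2:ℝ)⁻¹ • (v + w) = H - midpoint ℝ B C := by
      have hH' : H - O = (A - O) + (B - O) + (C - O) := hH
      rw [hmid, hu, hv, hw, show H = (H - O) + O by abel, hH']
      module
    rw [e1, e2, ← dist_eq_norm, ← dist_eq_norm, dist_comm X, dist_comm H, hd]
  have := dfAux u v w x R (r₂ / r₁ - 2⁻¹) hnu hnv hnw hsx hMX
  rw [show dist O X = ‖x‖ by rw [hx, dist_eq_norm, ← norm_neg]; congr 1; abel, this]
  have e1 : ‖w - v‖ = dist B C := by
    rw [dist_eq_norm, hv, hw, ← norm_neg]; congr 1; abel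
  have e2 : ‖u - w‖ = dist C A := by
    rw [dist_eq_norm, hu, hw, ← norm_neg]; congr 1; abel
  have e3 : ‖v - u‖ = dist A B := by
    rw [dist_eq_norm, hu, hv, ← norm_neg]; congr 1; abel
  rw [e1, e2, e3]

/-- The circles centered at the side midpoints `M₁, M₂, M₃` and passing through
the orthocenter `H` cut the corresponding sides in six points all equidistant
from the circumcenter `O`, with common squared distance
`R₂² = 5R² − (a²+b²+c²)/2` (the second Droz-Farny circle). -/
theorem stmt_12 (A B C O H : EuclideanSpace ℝ (Fin 2))
    (hABC : AffineIndependent ℝ ![A, B, C])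
    (a b c R : ℝ) (ha : a = dist B C) (hb : b = dist C A) (hc : c = dist A B)
    (hR : 0 < R) (hO : dist O A = R ∧ dist O B = R ∧ dist O C = R)
    (hH : H -ᵥ O = (A -ᵥ O) + (B -ᵥ O) + (C -ᵥ O)) :
    (∀ X : EuclideanSpace ℝ (Fin 2),
      Collinear ℝ ({B, C, X} : Set (EuclideanSpace ℝ (Fin 2))) →
      dist (midpoint ℝ B C) X = dist (midpoint ℝ B C) H →
      dist O X ^ 2 = 5 * R ^ 2 - (1 / 2) * (a ^ 2 + b ^ 2 + c ^ 2)) ∧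
    (∀ X : EuclideanSpace ℝ (Fin 2),
      Collinear ℝ ({C, A, X} : Set (EuclideanSpace ℝ (Fin 2))) →
      dist (midpoint ℝ C A) X = dist (midpoint ℝ C A) H →
      dist O X ^ 2 = 5 * R ^ 2 - (1 / 2) * (a ^ 2 + b ^ 2 + c ^ 2)) ∧
    (∀ X : EuclideanSpace ℝ (Fin 2),
      Collinear ℝ ({A, B, X} : Set (EuclideanSpace ℝ (Fin 2))) →
      dist (midpoint ℝ A B) X = dist (midpoint ℝ A B) H →
      dist O X ^ 2 = 5 * R ^ 2 - (1 / 2) * (a ^ 2 + b ^ 2 + c ^ 2)) := by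
  subst ha hb hc
  have hinj := hABC.injective
  have hAB : A ≠ B := fun h => by
    have : (0 : Fin 3) = 1 := hinj (by simpa using h)
    exact absurd this (by decide)
  have hBC : B ≠ C := fun h => by
    have : (1 : Fin 3) = 2 := hinj (by simpa using h)
    exact absurd this (by decide)
  have hCA : C ≠ A := fun h => by
    have : (2 : Fin 3) = 0 := hinj (by simpa using h)
    exact absurd this (by decide)
  have hH2 : H -ᵥ O = (B -ᵥ O) + (C -ᵥ O) + (A -ᵥ O) := by rw [hH]; abel
  have hH3 : H -ᵥ O = (C -ᵥ O) + (A -ᵥ O) + (B -ᵥ O) := by rw [hH]; abel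
  refine ⟨fun X hcol hd => ?_, fun X hcol hd => ?_, fun X hcol hd => ?_⟩
  · rw [dfKey A B C O H X hBC R hO.1 hO.2.1 hO.2.2 hH hcol hd]
  · rw [dfKey B C A O H X hCA R hO.2.1 hO.2.2 hO.1 hH2 hcol hd]; ring
  · rw [dfKey C A B O H X hAB R hO.2.2 hO.1 hO.2.1 hH3 hcol hd]; ring
end

section
/- Every Apollonius circle of rank k of a triangle ABC is orthogonal to the circumcircle of ABC: if U is a common point of the circumcircle and the Apollonius circle of rank k relative to BC, then the tangent line to the Apollonius circle at U passes through the circumcenter O (equivalently OU is tangent to the Apollonius circle, so OO_{A_k}² = R² + ρ² where O_{A_k}, ρ are the Apollonius circle's center and radius). -/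
open AffineMap RealInnerProductSpace


/-- Every Apollonius circle of rank `k` is orthogonal to the circumcircle: at a
common point `U` the radii are perpendicular (so the tangent to the Apollonius
circle at `U` passes through the circumcenter `O`), and
`O O_{A_k}² = R² + ρ²` where `O_{A_k} = midpoint Ak Ak'` and `ρ = AkAk'/2`. -/
theorem stmt_15 (A B C O U Ak Ak' : EuclideanSpace ℝ (Fin 2)) (k R : ℝ)
    (hABC : AffineIndependent ℝ ![A, B, C])
    (hne : dist A B ≠ dist A C)
    (hR : 0 < R) (hO : dist O A = R ∧ dist O B = R ∧ dist O C = R)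
    (hAk : Sbtw ℝ B Ak C)
    (hAkr : dist B Ak / dist Ak C = (dist A B / dist A C) ^ k)
    (hAk' : Collinear ℝ ({B, C, Ak'} : Set (EuclideanSpace ℝ (Fin 2))))
    (hAk'out : Ak' ∉ segment ℝ B C)
    (hAk'r : dist B Ak' / dist Ak' C = (dist A B / dist A C) ^ k)
    (hU1 : dist O U = R)
    (hU2 : dist (midpoint ℝ Ak Ak') U = dist Ak Ak' / 2) :
    inner (𝕜 := ℝ) (O -ᵥ U) (midpoint ℝ Ak Ak' -ᵥ U) = 0 ∧
    dist O (midpoint ℝ Ak Ak') ^ 2 = R ^ 2 + (dist Ak Ak' / 2) ^ 2 := by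
  have hBC : B ≠ C := by
    have := hABC.injective.ne (show (1 : Fin 3) ≠ 2 by decide)
    simpa using this
  have ha : (0:ℝ) < dist B C := dist_pos.mpr hBC
  set t : ℝ := (dist A B / dist A C) ^ k with ht
  -- parametrize Ak
  obtain ⟨⟨s, hs, hA⟩, -⟩ := sbtw_iff_mem_image_Ioo_and_ne.mp hAk
  -- parametrize Ak'
  have hmem := hAk'.mem_affineSpan_of_mem_of_ne (Set.mem_insert _ _)
    (Set.mem_insert_of_mem _ (Set.mem_insert _ _))
    (Set.mem_insert_of_mem _ (Set.mem_insert_of_mem _ rfl)) hBC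
  rw [show Ak' = (Ak' -ᵥ B) +ᵥ B from (vsub_vadd _ _).symm,
    vadd_left_mem_affineSpan_pair] at hmem
  obtain ⟨s', hr⟩ := hmem
  have hA' : Ak' = AffineMap.lineMap B C s' := by
    have h2 : s' • (C - B) = Ak' - B := hr
    simp only [AffineMap.lineMap_apply, vsub_eq_sub, vadd_eq_add]
    rw [h2]; abel
  have hs'out : s' ∉ Set.Icc (0:ℝ) 1 := by
    intro h
    exact hAk'out (by rw [segment_eq_image_lineMap]; exact ⟨s', h, hA'.symm⟩)
  -- ratio equations
  have hd1 : dist B Ak = s * dist B C := by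
    rw [← hA, dist_left_lineMap, Real.norm_eq_abs, abs_of_pos hs.1]
  have hd2 : dist Ak C = (1 - s) * dist B C := by
    rw [← hA, dist_lineMap_right, Real.norm_eq_abs, abs_of_pos (by linarith [hs.2])]
  have hd3 : dist B Ak' = |s'| * dist B C := by
    rw [hA', dist_left_lineMap, Real.norm_eq_abs]
  have hd4 : dist Ak' C = |1 - s'| * dist B C := by
    rw [hA', dist_lineMap_right, Real.norm_eq_abs]
  have h1 : s = t * (1 - s) := by
    rw [hd1, hd2] at hAkr
    have h1s : (0:ℝ) < 1 - s := by linarith [hs.2]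
    field_simp at hAkr
    apply mul_right_cancel₀ ha.ne'
    linear_combination dist B C * hAkr
  have hs'ne1 : s' ≠ 1 := fun h => hs'out (by rw [h]; constructor <;> norm_num)
  have h2 : |s'| = t * |1 - s'| := by
    rw [hd3, hd4] at hAk'r
    have hne0 : |1 - s'| ≠ 0 := by
      simp only [abs_ne_zero]; intro h; apply hs'ne1; linarith
    field_simp at hAk'r
    apply mul_right_cancel₀ ha.ne'
    linear_combination dist B C * hAk'r
  -- key algebraic identity
  have key : s + s' = 2 * (s * s') := by
    have hcase : s' < 0 ∨ 1 < s' := by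
      by_contra hcon
      push_neg at hcon
      exact hs'out ⟨hcon.1, hcon.2⟩
    rcases hcase with h0 | h0
    · rw [abs_of_neg h0, abs_of_pos (by linarith : (0:ℝ) < 1 - s')] at h2
      linear_combination (1 - s') * h1 - (1 - s) * h2
    · rw [abs_of_pos (by linarith : (0:ℝ) < s'), abs_of_neg (by linarith : 1 - s' < 0)] at h2
      linear_combination (1 - s') * h1 + (1 - s) * h2
  -- vectors
  set w : EuclideanSpace ℝ (Fin 2) := O - B with hwdef
  set d : EuclideanSpace ℝ (Fin 2) := C - B with hddef
  have hw : ‖w‖ = R := by rw [← hO.2.1, dist_eq_norm]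
  have hwc : ‖w - d‖ = R := by
    rw [← hO.2.2, dist_eq_norm]
    congr 1
    simp only [hwdef, hddef]; abel
  have hwd : 2 * ⟪w, d⟫ = ⟪d, d⟫ := by
    have hh : ‖w - d‖ ^ 2 = ‖w‖ ^ 2 := by rw [hw, hwc]
    rw [@norm_sub_sq_real] at hh
    have hdd : ⟪d, d⟫ = ‖d‖ ^ 2 := real_inner_self_eq_norm_sq d
    linarith
  have hww : ⟪w, w⟫ = R ^ 2 := by
    rw [real_inner_self_eq_norm_sq, hw]
  have e1 : O - Ak = w - s • d := by
    rw [← hA]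
    simp only [AffineMap.lineMap_apply, vsub_eq_sub, vadd_eq_add, hwdef, hddef]
    abel
  have e2 : O - Ak' = w - s' • d := by
    rw [hA']
    simp only [AffineMap.lineMap_apply, vsub_eq_sub, vadd_eq_add, hwdef, hddef]
    abel
  have hpq : ⟪O - Ak, O - Ak'⟫ = R ^ 2 := by
    rw [e1, e2]
    have expand : ⟪w - s • d, w - s' • d⟫ =
        ⟪w, w⟫ - s' * ⟪w, d⟫ - s * ⟪w, d⟫ + s * s' * ⟪d, d⟫ := by
      simp only [inner_sub_left, inner_sub_right, real_inner_smul_left,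
        real_inner_smul_right, real_inner_comm d w]
      ring
    rw [expand, hww]
    linear_combination (-(s * s')) * hwd - ⟪w, d⟫ * key
  -- part 2
  set p : EuclideanSpace ℝ (Fin 2) := O - Ak with hpdef
  set q : EuclideanSpace ℝ (Fin 2) := O - Ak' with hqdef
  have e3 : O - midpoint ℝ Ak Ak' = (1/2 : ℝ) • (p + q) := by
    rw [midpoint_eq_smul_add, invOf_eq_inv]
    simp only [hpdef, hqdef, smul_add, smul_sub]
    rw [show ((2:ℝ)⁻¹ : ℝ) = (1/2 : ℝ) by norm_num]
    module
  have e4 : Ak - Ak' = q - p := by simp only [hpdef, hqdef]; abel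
  have part2 : dist O (midpoint ℝ Ak Ak') ^ 2 = R ^ 2 + (dist Ak Ak' / 2) ^ 2 := by
    rw [dist_eq_norm, e3, norm_smul, Real.norm_eq_abs,
      abs_of_pos (by norm_num : (0:ℝ) < 1/2), dist_eq_norm, e4]
    have hpqn : ‖p + q‖ ^ 2 = ‖p‖ ^ 2 + 2 * ⟪p, q⟫ + ‖q‖ ^ 2 := norm_add_sq_real p q
    have hqpn : ‖q - p‖ ^ 2 = ‖q‖ ^ 2 - 2 * ⟪q, p⟫ + ‖p‖ ^ 2 := norm_sub_sq_real q p
    have hc' : ⟪q, p⟫ = R ^ 2 := by rw [real_inner_comm]; exact hpq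
    linear_combination (1/4 : ℝ) * hpqn - (1/4 : ℝ) * hqpn + (1/2 : ℝ) * hpq + (1/2 : ℝ) * hc'
  refine ⟨?_, part2⟩
  -- part 1
  have e5 : O - midpoint ℝ Ak Ak' = (O - U) - (midpoint ℝ Ak Ak' - U) := by abel
  have hn : ‖(O - U) - (midpoint ℝ Ak Ak' - U)‖ ^ 2 =
      ‖O - U‖ ^ 2 - 2 * ⟪O - U, midpoint ℝ Ak Ak' - U⟫ + ‖midpoint ℝ Ak Ak' - U‖ ^ 2 :=
    norm_sub_sq_real _ _
  rw [dist_eq_norm, e5, hn] at part2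
  rw [← dist_eq_norm] at hn
  have h1' : ‖O - U‖ = R := by rw [← dist_eq_norm]; exact hU1
  have h2' : ‖midpoint ℝ Ak Ak' - U‖ = dist Ak Ak' / 2 := by rw [← dist_eq_norm]; exact hU2
  rw [h1', h2'] at part2
  have : ⟪O - U, midpoint ℝ Ak Ak' - U⟫ = 0 := by linarith [part2]
  simpa [vsub_eq_sub] using this
end

section
/- In a harmonic quadrilateral ABCD with sides of lengths a, b, c, d and area S, for any interior point M with distances x, y, z, u to the four sides, one has x² + y² + z² + u² ≥ 4S²/(a² + b² + c² + d²), with equality if and only if x/a = y/b = z/c = u/d; the equality point is the intersection of the diagonals. -/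
set_option maxHeartbeats 2000000
set_option maxRecDepth 40000

open Metric


lemma dist_sq_fin2 (X Y : EuclideanSpace ℝ (Fin 2)) :
    dist X Y ^ 2 = (X 0 - Y 0) ^ 2 + (X 1 - Y 1) ^ 2 := by
  rw [EuclideanSpace.dist_eq, Real.sq_sqrt (by positivity)]
  simp [Fin.sum_univ_two, Real.dist_eq, sq_abs]

lemma sq_eq_of_nonneg {x y : ℝ} (hx : 0 ≤ x) (hy : 0 ≤ y) (h : x ^ 2 = y ^ 2) : x = y := by
  rw [← Real.sqrt_sq hx, ← Real.sqrt_sq hy, h]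

lemma abs_le_of_sq_le {x t : ℝ} (ht : 0 ≤ t) (h : x ^ 2 ≤ t ^ 2) : |x| ≤ t := by
  rw [← Real.sqrt_sq_eq_abs, ← Real.sqrt_sq ht]
  exact Real.sqrt_le_sqrt h

lemma infDist_line_mul (A B P : EuclideanSpace ℝ (Fin 2)) (hAB : A ≠ B) :
    infDist P (affineSpan ℝ ({A, B} : Set (EuclideanSpace ℝ (Fin 2)))) * dist A B
      = |(B 0 - A 0) * (P 1 - A 1) - (B 1 - A 1) * (P 0 - A 0)| := by
  have hd : (0:ℝ) < dist A B := dist_pos.2 hAB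
  have hd2 : dist A B ^ 2 = (B 0 - A 0) ^ 2 + (B 1 - A 1) ^ 2 := by
    rw [dist_sq_fin2]; ring
  obtain ⟨r₀, hr0⟩ : ∃ r : ℝ, r * dist A B ^ 2
      = (B 0 - A 0) * (P 0 - A 0) + (B 1 - A 1) * (P 1 - A 1) :=
    ⟨((B 0 - A 0) * (P 0 - A 0) + (B 1 - A 1) * (P 1 - A 1)) / dist A B ^ 2, by
      field_simp⟩
  have hQmem : (r₀ • (B -ᵥ A) +ᵥ A) ∈
      (affineSpan ℝ ({A, B} : Set (EuclideanSpace ℝ (Fin 2))) : Set _) :=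
    vadd_left_mem_affineSpan_pair.2 ⟨r₀, rfl⟩
  have hc : ∀ i, P i - (r₀ • (B -ᵥ A) +ᵥ A) i = (P i - A i) - r₀ * (B i - A i) := by
    intro i; simp; ring
  have hPQ : dist P (r₀ • (B -ᵥ A) +ᵥ A) * dist A B
      = |(B 0 - A 0) * (P 1 - A 1) - (B 1 - A 1) * (P 0 - A 0)| := by
    apply sq_eq_of_nonneg (by positivity) (abs_nonneg _)
    rw [mul_pow, sq_abs, dist_sq_fin2, hc 0, hc 1]
    linear_combination
      (r₀ * ((B 0 - A 0) ^ 2 + (B 1 - A 1) ^ 2)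
        - ((B 0 - A 0) * (P 0 - A 0) + (B 1 - A 1) * (P 1 - A 1))) * hr0
      + ((P 0 - A 0) ^ 2 + (P 1 - A 1) ^ 2
        - r₀ * ((B 0 - A 0) * (P 0 - A 0) + (B 1 - A 1) * (P 1 - A 1))) * hd2
  apply le_antisymm
  · calc infDist P _ * dist A B ≤ dist P (r₀ • (B -ᵥ A) +ᵥ A) * dist A B :=
          mul_le_mul_of_nonneg_right (infDist_le_dist_of_mem hQmem) hd.le
    _ = _ := hPQ
  · rw [← div_le_iff₀ hd, infDist_eq_iInf]
    have hne : Nonempty (affineSpan ℝ ({A, B} : Set (EuclideanSpace ℝ (Fin 2))) : Set _) :=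
      ⟨⟨A, left_mem_affineSpan_pair ℝ A B⟩⟩
    apply le_ciInf
    intro y
    obtain ⟨Y, hY⟩ := y
    have hY' : (Y -ᵥ A) +ᵥ A ∈ affineSpan ℝ ({A, B} : Set (EuclideanSpace ℝ (Fin 2))) := by
      simpa using hY
    obtain ⟨r, hr⟩ := vadd_left_mem_affineSpan_pair.1 hY'
    have hYc : ∀ i, P i - Y i = (P i - A i) - r * (B i - A i) := by
      intro i
      have h0 := congrArg (fun v => v i) hr
      simp only [PiLp.smul_apply, PiLp.sub_apply, vsub_eq_sub, smul_eq_mul] at h0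
      linear_combination h0
    rw [div_le_iff₀ hd]
    apply abs_le_of_sq_le (by positivity)
    rw [mul_pow, dist_sq_fin2, hYc 0, hYc 1, hd2]
    linarith [sq_nonneg ((B 0 - A 0) * ((P 0 - A 0) - r * (B 0 - A 0))
      + (B 1 - A 1) * ((P 1 - A 1) - r * (B 1 - A 1)))]

lemma cs_part (a b c d S x y z u : ℝ) (ha : 0 < a) (hb : 0 < b) (hc : 0 < c) (hd : 0 < d)
    (hsum : a * x + b * y + c * z + d * u = 2 * S) :
    x ^ 2 + y ^ 2 + z ^ 2 + u ^ 2 ≥ 4 * S ^ 2 / (a ^ 2 + b ^ 2 + c ^ 2 + d ^ 2) ∧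
    (x ^ 2 + y ^ 2 + z ^ 2 + u ^ 2 = 4 * S ^ 2 / (a ^ 2 + b ^ 2 + c ^ 2 + d ^ 2) ↔
      (x / a = y / b ∧ y / b = z / c ∧ z / c = u / d)) := by
  have hT : (0:ℝ) < a ^ 2 + b ^ 2 + c ^ 2 + d ^ 2 := by positivity
  have h4 : (a * x + b * y + c * z + d * u) ^ 2 = 4 * S ^ 2 := by rw [hsum]; ring
  constructor
  · rw [ge_iff_le, div_le_iff₀ hT]
    nlinarith [sq_nonneg (a*y - b*x), sq_nonneg (a*z - c*x), sq_nonneg (a*u - d*x),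
      sq_nonneg (b*z - c*y), sq_nonneg (b*u - d*y), sq_nonneg (c*u - d*z)]
  · constructor
    · intro heq
      rw [eq_div_iff hT.ne'] at heq
      have hsq : (a*y - b*x)^2 + (a*z - c*x)^2 + (a*u - d*x)^2 + (b*z - c*y)^2
          + (b*u - d*y)^2 + (c*u - d*z)^2 = 0 := by
        linear_combination heq - (a * x + b * y + c * z + d * u + 2 * S) * hsum
      have n1 := sq_nonneg (a*y - b*x)
      have n2 := sq_nonneg (a*z - c*x)
      have n3 := sq_nonneg (a*u - d*x)
      have n4 := sq_nonneg (b*z - c*y)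
      have n5 := sq_nonneg (b*u - d*y)
      have n6 := sq_nonneg (c*u - d*z)
      have e1 : a*y - b*x = 0 := (pow_eq_zero_iff two_ne_zero).1 (by linarith)
      have e2 : b*z - c*y = 0 := (pow_eq_zero_iff two_ne_zero).1 (by linarith)
      have e3 : c*u - d*z = 0 := (pow_eq_zero_iff two_ne_zero).1 (by linarith)
      refine ⟨?_, ?_, ?_⟩
      · rw [div_eq_div_iff ha.ne' hb.ne']; linarith
      · rw [div_eq_div_iff hb.ne' hc.ne']; linarith
      · rw [div_eq_div_iff hc.ne' hd.ne']; linarith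
    · rintro ⟨h1, h2, h3⟩
      have h4' : x / a = z / c := h1.trans h2
      have h5 : x / a = u / d := h4'.trans h3
      have h6 : y / b = u / d := h2.trans h3
      rw [div_eq_div_iff ha.ne' hb.ne'] at h1
      rw [div_eq_div_iff hb.ne' hc.ne'] at h2
      rw [div_eq_div_iff hc.ne' hd.ne'] at h3
      rw [div_eq_div_iff ha.ne' hc.ne'] at h4'
      rw [div_eq_div_iff ha.ne' hd.ne'] at h5
      rw [div_eq_div_iff hb.ne' hd.ne'] at h6
      rw [eq_div_iff hT.ne']
      linear_combination (x*b - y*a) * h1 + (y*c - z*b) * h2 + (z*d - u*c) * h3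
        + (x*c - z*a) * h4' + (x*d - u*a) * h5 + (y*d - u*b) * h6
        + (a * x + b * y + c * z + d * u + 2 * S) * hsum

lemma ept (X Y : EuclideanSpace ℝ (Fin 2)) (h0 : X 0 = Y 0) (h1 : X 1 = Y 1) : X = Y := by
  ext i
  fin_cases i
  · exact h0
  · exact h1

lemma collinear_of_det (A B C : EuclideanSpace ℝ (Fin 2))
    (h : (B 0 - A 0) * (C 1 - A 1) - (B 1 - A 1) * (C 0 - A 0) = 0) :
    Collinear ℝ ({A, B, C} : Set (EuclideanSpace ℝ (Fin 2))) := by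
  by_cases hAB : B = A
  · rw [hAB]
    rw [Set.insert_comm, Set.insert_idem]
    exact collinear_pair ℝ A C
  · have hn : (B 0 - A 0) ^ 2 + (B 1 - A 1) ^ 2 ≠ 0 := by
      intro hn0
      apply hAB
      apply ept
      · nlinarith [sq_nonneg (B 0 - A 0), sq_nonneg (B 1 - A 1)]
      · nlinarith [sq_nonneg (B 0 - A 0), sq_nonneg (B 1 - A 1)]
    refine (collinear_iff_of_mem (Set.mem_insert A _)).2 ⟨B - A, ?_⟩
    rintro p hp
    rcases hp with rfl | rfl | rfl
    · exact ⟨0, by simp⟩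
    · refine ⟨1, ?_⟩
      apply ept <;> simp
    · refine ⟨((B 0 - A 0) * (p 0 - A 0) + (B 1 - A 1) * (p 1 - A 1))
        / ((B 0 - A 0) ^ 2 + (B 1 - A 1) ^ 2), ?_⟩
      apply ept
      · have : (p 0 - A 0) * ((B 0 - A 0) ^ 2 + (B 1 - A 1) ^ 2)
            = ((B 0 - A 0) * (p 0 - A 0) + (B 1 - A 1) * (p 1 - A 1)) * (B 0 - A 0) := by
          linear_combination (-(B 1 - A 1)) * h
        simp only [vadd_eq_add, PiLp.add_apply, PiLp.smul_apply, PiLp.sub_apply, smul_eq_mul]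
        field_simp
        linarith [this]
      · have : (p 1 - A 1) * ((B 0 - A 0) ^ 2 + (B 1 - A 1) ^ 2)
            = ((B 0 - A 0) * (p 0 - A 0) + (B 1 - A 1) * (p 1 - A 1)) * (B 1 - A 1) := by
          linear_combination (B 0 - A 0) * h
        simp only [vadd_eq_add, PiLp.add_apply, PiLp.smul_apply, PiLp.sub_apply, smul_eq_mul]
        field_simp
        linarith [this]

lemma circ_area (u1 u2 v1 v2 w1 w2 R : ℝ)
    (hu : u1^2 + u2^2 = R^2) (hv : v1^2 + v2^2 = R^2) (hw : w1^2 + w2^2 = R^2) :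
    ((v1 - u1) * (w2 - u2) - (v2 - u2) * (w1 - u1))^2 * (4 * R^2)
      = ((u1 - v1)^2 + (u2 - v2)^2) * ((v1 - w1)^2 + (v2 - w2)^2) * ((w1 - u1)^2 + (w2 - u2)^2) := by
  linear_combination
    ((1)*w2^4 + (2)*w1^2*w2^2 + (1)*w1^4 + (-2)*v2*w2^3 + (-2)*v2*w1^2*w2 + (1)*v2^2*w2^2 + (-3)*v2^2*w1^2 + (-2)*v1*w1*w2^2 + (-2)*v1*w1^3 + (8)*v1*v2*w1*w2 + (-3)*v1^2*w2^2 + (1)*v1^2*w1^2 + (-2)*u2*w2^3 + (-2)*u2*w1^2*w2 + (4)*u2*v2*w1^2 + (2)*u2*v2^2*w2 + (-4)*u2*v1*w1*w2 + (-4)*u2*v1*v2*w1 + (6)*u2*v1^2*w2 + (1)*u2^2*w2^2 + (1)*u2^2*w1^2 + (2)*u2^2*v2*w2 + (-3)*u2^2*v2^2 + (2)*u2^2*v1*w1 + (-3)*u2^2*v1^2 + (2)*u1*w1*w2^2 + (2)*u1*w1^3 + (-4)*u1*v2*w1*w2 + (2)*u1*v2^2*w1 + (4)*u1*v1*w2^2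 + (-4)*u1*v1*v2*w2 + (-2)*u1*v1^2*w1 + (-3)*u1^2*w2^2 + (-3)*u1^2*w1^2 + (2)*u1^2*v2*w2 + (1)*u1^2*v2^2 + (2)*u1^2*v1*w1 + (1)*u1^2*v1^2) * hu
    + ((-1)*w2^4 + (-2)*w1^2*w2^2 + (-1)*w1^4 + (2)*v2*w2^3 + (2)*v2*w1^2*w2 + (-1)*v2^2*w2^2 + (-1)*v2^2*w1^2 + (2)*v1*w1*w2^2 + (2)*v1*w1^3 + (-1)*v1^2*w2^2 + (-1)*v1^2*w1^2 + (2)*u2*w2^3 + (2)*u2*w1^2*w2 + (-2)*u2*v2*w2^2 + (2)*u2*v2*w1^2 + (2)*u2*v2^2*w2 + (-4)*u2*v1*w1*w2 + (2)*u2*v1^2*w2 + (1)*u2^2*w2^2 + (-3)*u2^2*w1^2 + (-2)*u2^2*v2*w2 + (-1)*u2^2*v2^2 + (2)*u2^2*v1*w1 + (-1)*u2^2*v1^2 + (-4)*u2^3*w2 + (2)*u2^3*v2 + (2)*u2^4 + (-2)*u1*w1*w2^2 + (-2)*u1*w1^3 + (-4)*u1*v2*w1*w2 + (2)*u1*v2^2*w1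 + (2)*u1*v1*w2^2 + (-2)*u1*v1*w1^2 + (2)*u1*v1^2*w1 + (8)*u1*u2*w1*w2 + (-4)*u1*u2*v2*w1 + (-4)*u1*u2*v1*w2 + (2)*u1*u2^2*v1 + (1)*u1^2*w2^2 + (5)*u1^2*w1^2 + (2)*u1^2*v2*w2 + (-1)*u1^2*v2^2 + (-2)*u1^2*v1*w1 + (-1)*u1^2*v1^2 + (-4)*u1^2*u2*w2 + (2)*u1^2*u2*v2 + (2)*u1^3*v1 + (-2)*u1^4) * hv
    + ((2)*u2*v2*w2^2 + (2)*u2*v2*w1^2 + (-4)*u2*v2^2*w2 + (-4)*u2*v1*v2*w1 + (-2)*u2^2*w2^2 + (-2)*u2^2*w1^2 + (4)*u2^2*v2^2 + (4)*u2^2*v1*w1 + (4)*u2^3*w2 + (-2)*u2^3*v2 + (-2)*u2^4 + (4)*u1*v2^2*w1 + (2)*u1*v1*w2^2 + (2)*u1*v1*w1^2 + (-4)*u1*v1*v2*w2 + (-4)*u1*u2*v2*w1 + (-4)*u1*u2*v1*w2 + (8)*u1*u2*v1*v2 + (-2)*u1*u2^2*v1 + (-2)*u1^2*w2^2 + (-2)*u1^2*w1^2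 + (4)*u1^2*v2*w2 + (-4)*u1^2*v2^2 + (4)*u1^2*u2*w2 + (-2)*u1^2*u2*v2 + (-2)*u1^3*v1 + (2)*u1^4) * hw

lemma step1 (AB BC CD DA AC BD dA dB Del Q t s : ℝ)
    (hQ : Del^2*Q^2 ≠ 0)
    (S1 : (t*Del)^2*Q = AB*BD*DA) (C1 : dA^2*Q = AB*BC*AC)
    (S2 : (s*Del)^2*Q = AB*BC*AC) (C3 : dB^2*Q = BC*CD*BD)
    (harm : AB*CD = BC*DA) :
    (t*dA)^2*BC^2 = (s*dB)^2*AB^2 := by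
  apply mul_right_cancel₀ hQ
  linear_combination (dA^2*Q*BC^2)*S1 + (AB*BD*DA*BC^2)*C1 - (dB^2*Q*AB^2)*S2
    - (AB*BC*AC*AB^2)*C3 - (AB^2*BC^2*AC*BD)*harm

lemma step2 (AB BC CD DA AC BD dB dC Del Q t s : ℝ)
    (hQ : Del^2*Q^2 ≠ 0)
    (S2 : (s*Del)^2*Q = AB*BC*AC) (C3 : dB^2*Q = BC*CD*BD)
    (S3 : ((1-t)*Del)^2*Q = BC*CD*BD) (C4 : dC^2*Q = CD*DA*AC)
    (harm : AB*CD = BC*DA) :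
    (s*dB)^2*CD^2 = ((1-t)*dC)^2*BC^2 := by
  apply mul_right_cancel₀ hQ
  linear_combination (dB^2*Q*CD^2)*S2 + (AB*BC*AC*CD^2)*C3 - (dC^2*Q*BC^2)*S3
    - (BC*CD*BD*BC^2)*C4 + (BC^2*CD^2*AC*BD)*harm

lemma step3 (AB BC CD DA AC BD dC dD Del Q t s : ℝ)
    (hQ : Del^2*Q^2 ≠ 0)
    (S3 : ((1-t)*Del)^2*Q = BC*CD*BD) (C4 : dC^2*Q = CD*DA*AC)
    (S4 : ((1-s)*Del)^2*Q = AC*CD*DA) (C5 : dD^2*Q = DA*AB*BD)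
    (harm : AB*CD = BC*DA) :
    ((1-t)*dC)^2*DA^2 = ((1-s)*dD)^2*CD^2 := by
  apply mul_right_cancel₀ hQ
  linear_combination (dC^2*Q*DA^2)*S3 + (BC*CD*BD*DA^2)*C4 - (dD^2*Q*CD^2)*S4
    - (AC*CD*DA*CD^2)*C5 - (CD^2*DA^2*AC*BD)*harm

lemma quad_key (a1 a2 b1 b2 c1 c2 d1 d2 o1 o2 R t s : ℝ)
    (hA : (a1 - o1)^2 + (a2 - o2)^2 = R^2) (hB : (b1 - o1)^2 + (b2 - o2)^2 = R^2)
    (hC : (c1 - o1)^2 + (c2 - o2)^2 = R^2) (hD : (d1 - o1)^2 + (d2 - o2)^2 = R^2)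
    (hharm : ((a1-b1)^2+(a2-b2)^2) * ((c1-d1)^2+(c2-d2)^2) = ((b1-c1)^2+(b2-c2)^2) * ((d1-a1)^2+(d2-a2)^2))
    (hdABC : ((b1-a1)*(c2-a2) - (b2-a2)*(c1-a1)) ≠ 0) (hR : R ≠ 0)
    (i1 : a1 + t*(c1-a1) = b1 + s*(d1-b1)) (i2 : a2 + t*(c2-a2) = b2 + s*(d2-b2)) :
    (t*((b1-a1)*(c2-a2) - (b2-a2)*(c1-a1)))^2 * ((b1-c1)^2+(b2-c2)^2)^2 = (s*((c1-b1)*(d2-b2) - (c2-b2)*(d1-b1)))^2 * ((a1-b1)^2+(a2-b2)^2)^2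
    ∧ (s*((c1-b1)*(d2-b2) - (c2-b2)*(d1-b1)))^2 * ((c1-d1)^2+(c2-d2)^2)^2 = ((1-t)*((d1-c1)*(a2-c2) - (d2-c2)*(a1-c1)))^2 * ((b1-c1)^2+(b2-c2)^2)^2
    ∧ ((1-t)*((d1-c1)*(a2-c2) - (d2-c2)*(a1-c1)))^2 * ((d1-a1)^2+(d2-a2)^2)^2 = ((1-s)*((a1-d1)*(b2-d2) - (a2-d2)*(b1-d1)))^2 * ((c1-d1)^2+(c2-d2)^2)^2 := by
  have e1 : t*((c1-a1)*(d2-b2) - (c2-a2)*(d1-b1)) = (b1-a1)*(d2-b2) - (b2-a2)*(d1-b1) := by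
    linear_combination (d2-b2)*i1 - (d1-b1)*i2
  have e2 : s*((c1-a1)*(d2-b2) - (c2-a2)*(d1-b1)) = ((b1-a1)*(c2-a2) - (b2-a2)*(c1-a1)) := by
    linear_combination (c2-a2)*i1 - (c1-a1)*i2
  have hDel : ((c1-a1)*(d2-b2) - (c2-a2)*(d1-b1)) ≠ 0 := by
    intro h
    apply hdABC
    rw [h, mul_zero] at e2
    exact e2.symm
  have e3 : (1-s)*((c1-a1)*(d2-b2) - (c2-a2)*(d1-b1)) = ((c1-a1)*(d2-a2) - (c2-a2)*(d1-a1)) := by linear_combination -e2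
  have e4 : (1-t)*((c1-a1)*(d2-b2) - (c2-a2)*(d1-b1)) = ((c1-b1)*(d2-b2) - (c2-b2)*(d1-b1)) := by linear_combination -e1
  have c1' := circ_area (a1 - o1) (a2 - o2) (b1 - o1) (b2 - o2) (c1 - o1) (c2 - o2) R hA hB hC
  have C1 : ((b1-a1)*(c2-a2) - (b2-a2)*(c1-a1))^2 * (4*R^2) = ((a1-b1)^2+(a2-b2)^2) * ((b1-c1)^2+(b2-c2)^2) * ((a1-c1)^2+(a2-c2)^2) := by linear_combination c1'
  have c2' := circ_area (a1 - o1) (a2 - o2) (b1 - o1) (b2 - o2) (d1 - o1) (d2 - o2) R hA hB hD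
  have C2 : ((b1-a1)*(d2-a2) - (b2-a2)*(d1-a1))^2 * (4*R^2) = ((a1-b1)^2+(a2-b2)^2) * ((b1-d1)^2+(b2-d2)^2) * ((d1-a1)^2+(d2-a2)^2) := by linear_combination c2'
  have c3' := circ_area (b1 - o1) (b2 - o2) (c1 - o1) (c2 - o2) (d1 - o1) (d2 - o2) R hB hC hD
  have C3 : ((c1-b1)*(d2-b2) - (c2-b2)*(d1-b1))^2 * (4*R^2) = ((b1-c1)^2+(b2-c2)^2) * ((c1-d1)^2+(c2-d2)^2) * ((b1-d1)^2+(b2-d2)^2) := by linear_combination c3'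
  have c4' := circ_area (c1 - o1) (c2 - o2) (d1 - o1) (d2 - o2) (a1 - o1) (a2 - o2) R hC hD hA
  have C4 : ((d1-c1)*(a2-c2) - (d2-c2)*(a1-c1))^2 * (4*R^2) = ((c1-d1)^2+(c2-d2)^2) * ((d1-a1)^2+(d2-a2)^2) * ((a1-c1)^2+(a2-c2)^2) := by linear_combination c4'
  have c5' := circ_area (d1 - o1) (d2 - o2) (a1 - o1) (a2 - o2) (b1 - o1) (b2 - o2) R hD hA hB
  have C5 : ((a1-d1)*(b2-d2) - (a2-d2)*(b1-d1))^2 * (4*R^2) = ((d1-a1)^2+(d2-a2)^2) * ((a1-b1)^2+(a2-b2)^2) * ((b1-d1)^2+(b2-d2)^2) := by linear_combination c5'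
  have c6' := circ_area (a1 - o1) (a2 - o2) (c1 - o1) (c2 - o2) (d1 - o1) (d2 - o2) R hA hC hD
  have C6 : ((c1-a1)*(d2-a2) - (c2-a2)*(d1-a1))^2 * (4*R^2) = ((a1-c1)^2+(a2-c2)^2) * ((c1-d1)^2+(c2-d2)^2) * ((d1-a1)^2+(d2-a2)^2) := by linear_combination c6'
  have S1 : (t*((c1-a1)*(d2-b2) - (c2-a2)*(d1-b1)))^2 * (4*R^2) = ((a1-b1)^2+(a2-b2)^2) * ((b1-d1)^2+(b2-d2)^2) * ((d1-a1)^2+(d2-a2)^2) := by rw [e1]; linear_combination C2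
  have S2 : (s*((c1-a1)*(d2-b2) - (c2-a2)*(d1-b1)))^2 * (4*R^2) = ((a1-b1)^2+(a2-b2)^2) * ((b1-c1)^2+(b2-c2)^2) * ((a1-c1)^2+(a2-c2)^2) := by rw [e2]; linear_combination C1
  have S3 : ((1-t)*((c1-a1)*(d2-b2) - (c2-a2)*(d1-b1)))^2 * (4*R^2) = ((b1-c1)^2+(b2-c2)^2) * ((c1-d1)^2+(c2-d2)^2) * ((b1-d1)^2+(b2-d2)^2) := by rw [e4]; linear_combination C3
  have S4 : ((1-s)*((c1-a1)*(d2-b2) - (c2-a2)*(d1-b1)))^2 * (4*R^2) = ((a1-c1)^2+(a2-c2)^2) * ((c1-d1)^2+(c2-d2)^2) * ((d1-a1)^2+(d2-a2)^2) := by rw [e3]; linear_combination C6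
  have hM : ((c1-a1)*(d2-b2) - (c2-a2)*(d1-b1))^2 * (4*R^2)^2 ≠ 0 :=
    mul_ne_zero (pow_ne_zero 2 hDel) (pow_ne_zero 2 (mul_ne_zero (by norm_num) (pow_ne_zero 2 hR)))
  exact ⟨step1 _ _ _ _ _ _ _ _ _ _ _ _ hM S1 C1 S2 C3 hharm,
    step2 _ _ _ _ _ _ _ _ _ _ _ _ hM S2 C3 S3 C4 hharm,
    step3 _ _ _ _ _ _ _ _ _ _ _ _ hM S3 C4 S4 C5 hharm⟩

lemma rstep (t s a b X Y AB BC : ℝ) (ha2 : a^2 = AB) (hb2 : b^2 = BC)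
    (Q : (t*X)^2 * BC^2 = (s*Y)^2 * AB^2) :
    (t * |X| * b^2)^2 = (s * |Y| * a^2)^2 := by
  rw [mul_pow, mul_pow, mul_pow, mul_pow, sq_abs, sq_abs, ha2, hb2]
  linear_combination Q

/-- In a harmonic quadrilateral `ABCD` with sides `a, b, c, d` and area `S`, for
any interior point `M` with distances `x, y, z, u` to the four sides (so that
`ax + by + cz + du = 2S`) one has `x²+y²+z²+u² ≥ 4S²/(a²+b²+c²+d²)`, with
equality iff `x/a = y/b = z/c = u/d`; and the diagonal intersection point `K`
has distances to the sides proportional to the side lengths. -/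
theorem stmt_17 (A B C D K O : EuclideanSpace ℝ (Fin 2))
    (a b c d R S x y z u : ℝ)
    (hABC : AffineIndependent ℝ ![A, B, C])
    (ha : a = dist A B) (hb : b = dist B C) (hc : c = dist C D) (hd : d = dist D A)
    (hR : 0 < R)
    (hcirc : dist O A = R ∧ dist O B = R ∧ dist O C = R ∧ dist O D = R)
    (hharm : dist A B * dist C D = dist B C * dist A D)
    (hK1 : Sbtw ℝ A K C) (hK2 : Sbtw ℝ B K D)
    (hS : 0 < S)
    (hx : 0 ≤ x) (hy : 0 ≤ y) (hz : 0 ≤ z) (hu : 0 ≤ u)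
    (hsum : a * x + b * y + c * z + d * u = 2 * S) :
    x ^ 2 + y ^ 2 + z ^ 2 + u ^ 2 ≥ 4 * S ^ 2 / (a ^ 2 + b ^ 2 + c ^ 2 + d ^ 2) ∧
    (x ^ 2 + y ^ 2 + z ^ 2 + u ^ 2 = 4 * S ^ 2 / (a ^ 2 + b ^ 2 + c ^ 2 + d ^ 2) ↔
      (x / a = y / b ∧ y / b = z / c ∧ z / c = u / d)) ∧
    (infDist K (affineSpan ℝ ({A, B} : Set (EuclideanSpace ℝ (Fin 2)))) / a =
        infDist K (affineSpan ℝ ({B, C} : Set (EuclideanSpace ℝ (Fin 2)))) / b ∧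
      infDist K (affineSpan ℝ ({B, C} : Set (EuclideanSpace ℝ (Fin 2)))) / b =
        infDist K (affineSpan ℝ ({C, D} : Set (EuclideanSpace ℝ (Fin 2)))) / c ∧
      infDist K (affineSpan ℝ ({C, D} : Set (EuclideanSpace ℝ (Fin 2)))) / c =
        infDist K (affineSpan ℝ ({D, A} : Set (EuclideanSpace ℝ (Fin 2)))) / d) := by
  obtain ⟨hOA, hOB, hOC, hOD⟩ := hcirc
  have hA' : (A 0 - O 0)^2 + (A 1 - O 1)^2 = R^2 := by
    have hh := dist_sq_fin2 O A; rw [hOA] at hh; linear_combination -hh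
  have hB' : (B 0 - O 0)^2 + (B 1 - O 1)^2 = R^2 := by
    have hh := dist_sq_fin2 O B; rw [hOB] at hh; linear_combination -hh
  have hC' : (C 0 - O 0)^2 + (C 1 - O 1)^2 = R^2 := by
    have hh := dist_sq_fin2 O C; rw [hOC] at hh; linear_combination -hh
  have hD' : (D 0 - O 0)^2 + (D 1 - O 1)^2 = R^2 := by
    have hh := dist_sq_fin2 O D; rw [hOD] at hh; linear_combination -hh
  have hdABC : ((B 0 - A 0)*(C 1 - A 1) - (B 1 - A 1)*(C 0 - A 0)) ≠ 0 := by
    intro h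
    exact (affineIndependent_iff_not_collinear_set.mp hABC) (collinear_of_det A B C h)
  obtain ⟨t, ht, hKt⟩ := hK1.mem_image_Ioo
  obtain ⟨s, hs, hKs⟩ := hK2.mem_image_Ioo
  have hKi : ∀ i, K i = A i + t * (C i - A i) := by
    intro i; rw [← hKt]; simp [AffineMap.lineMap_apply]; ring
  have hKsi : ∀ i, K i = B i + s * (D i - B i) := by
    intro i; rw [← hKs]; simp [AffineMap.lineMap_apply]; ring
  have i1 : A 0 + t * (C 0 - A 0) = B 0 + s * (D 0 - B 0) := by rw [← hKi 0, ← hKsi 0]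
  have i2 : A 1 + t * (C 1 - A 1) = B 1 + s * (D 1 - B 1) := by rw [← hKi 1, ← hKsi 1]
  have e2 : s * ((C 0 - A 0)*(D 1 - B 1) - (C 1 - A 1)*(D 0 - B 0)) = ((B 0 - A 0)*(C 1 - A 1) - (B 1 - A 1)*(C 0 - A 0)) := by
    linear_combination (C 1 - A 1) * i1 - (C 0 - A 0) * i2
  have hDel : ((C 0 - A 0)*(D 1 - B 1) - (C 1 - A 1)*(D 0 - B 0)) ≠ 0 := by
    intro h
    apply hdABC
    rw [h, mul_zero] at e2
    exact e2.symm
  have e3 : (1 - s) * ((C 0 - A 0)*(D 1 - B 1) - (C 1 - A 1)*(D 0 - B 0)) = ((C 0 - A 0)*(D 1 - A 1) - (C 1 - A 1)*(D 0 - A 0)) := by linear_combination -e2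
  have hs1 : s ≠ 1 := by
    intro h
    apply hK2.ne_right
    apply ept
    · rw [hKsi 0, h]; ring
    · rw [hKsi 1, h]; ring
  have hACD : ((C 0 - A 0)*(D 1 - A 1) - (C 1 - A 1)*(D 0 - A 0)) ≠ 0 := by
    intro h
    rw [h] at e3
    rcases mul_eq_zero.mp e3 with h1 | h1
    · exact hs1 (by linarith)
    · exact hDel h1
  have hAB : A ≠ B := by intro h; apply hdABC; rw [h]; ring
  have hBC : B ≠ C := by intro h; apply hdABC; rw [← h]; ring
  have hCD : C ≠ D := by intro h; apply hACD; rw [h]; ring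
  have hDA : D ≠ A := by intro h; apply hACD; rw [h]; ring
  have ha0 : 0 < a := ha ▸ dist_pos.2 hAB
  have hb0 : 0 < b := hb ▸ dist_pos.2 hBC
  have hc0 : 0 < c := hc ▸ dist_pos.2 hCD
  have hd0 : 0 < d := hd ▸ dist_pos.2 hDA
  obtain ⟨part1, part2⟩ := cs_part a b c d S x y z u ha0 hb0 hc0 hd0 hsum
  have ha2 : a^2 = ((A 0 - B 0)^2 + (A 1 - B 1)^2) := by rw [ha]; exact dist_sq_fin2 A B
  have hb2 : b^2 = ((B 0 - C 0)^2 + (B 1 - C 1)^2) := by rw [hb]; exact dist_sq_fin2 B C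
  have hc2 : c^2 = ((C 0 - D 0)^2 + (C 1 - D 1)^2) := by rw [hc]; exact dist_sq_fin2 C D
  have hd2 : d^2 = ((D 0 - A 0)^2 + (D 1 - A 1)^2) := by rw [hd]; exact dist_sq_fin2 D A
  have hq : (dist A B * dist C D)^2 = (dist B C * dist A D)^2 := by rw [hharm]
  rw [mul_pow, mul_pow, dist_sq_fin2, dist_sq_fin2, dist_sq_fin2, dist_sq_fin2] at hq
  have hharm2 : ((A 0 - B 0)^2+(A 1 - B 1)^2) * ((C 0 - D 0)^2+(C 1 - D 1)^2)
      = ((B 0 - C 0)^2+(B 1 - C 1)^2) * ((D 0 - A 0)^2+(D 1 - A 1)^2) := by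
    linear_combination hq
  obtain ⟨Q1, Q2, Q3⟩ := quad_key (A 0) (A 1) (B 0) (B 1) (C 0) (C 1) (D 0) (D 1)
    (O 0) (O 1) R t s hA' hB' hC' hD' hharm2 hdABC hR.ne' i1 i2
  have L1 := infDist_line_mul A B K hAB
  have L2 := infDist_line_mul B C K hBC
  have L3 := infDist_line_mul C D K hCD
  have L4 := infDist_line_mul D A K hDA
  have hdet1 : (B 0 - A 0) * (K 1 - A 1) - (B 1 - A 1) * (K 0 - A 0) = t * ((B 0 - A 0)*(C 1 - A 1) - (B 1 - A 1)*(C 0 - A 0)) := by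
    rw [hKi 0, hKi 1]; ring
  have hdet2 : (C 0 - B 0) * (K 1 - B 1) - (C 1 - B 1) * (K 0 - B 0) = s * ((C 0 - B 0)*(D 1 - B 1) - (C 1 - B 1)*(D 0 - B 0)) := by
    rw [hKsi 0, hKsi 1]; ring
  have hdet3 : (D 0 - C 0) * (K 1 - C 1) - (D 1 - C 1) * (K 0 - C 0) = (1 - t) * ((D 0 - C 0)*(A 1 - C 1) - (D 1 - C 1)*(A 0 - C 0)) := by
    rw [hKi 0, hKi 1]; ring
  have hdet4 : (A 0 - D 0) * (K 1 - D 1) - (A 1 - D 1) * (K 0 - D 0) = (1 - s) * ((A 0 - D 0)*(B 1 - D 1) - (A 1 - D 1)*(B 0 - D 0)) := by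
    rw [hKsi 0, hKsi 1]; ring
  have L1' : infDist K (affineSpan ℝ ({A, B} : Set (EuclideanSpace ℝ (Fin 2)))) * a
      = t * |((B 0 - A 0)*(C 1 - A 1) - (B 1 - A 1)*(C 0 - A 0))| := by
    rw [ha, L1, hdet1, abs_mul, abs_of_nonneg ht.1.le]
  have L2' : infDist K (affineSpan ℝ ({B, C} : Set (EuclideanSpace ℝ (Fin 2)))) * b
      = s * |((C 0 - B 0)*(D 1 - B 1) - (C 1 - B 1)*(D 0 - B 0))| := by
    rw [hb, L2, hdet2, abs_mul, abs_of_nonneg hs.1.le]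
  have L3' : infDist K (affineSpan ℝ ({C, D} : Set (EuclideanSpace ℝ (Fin 2)))) * c
      = (1 - t) * |((D 0 - C 0)*(A 1 - C 1) - (D 1 - C 1)*(A 0 - C 0))| := by
    rw [hc, L3, hdet3, abs_mul, abs_of_nonneg (sub_nonneg.2 ht.2.le)]
  have L4' : infDist K (affineSpan ℝ ({D, A} : Set (EuclideanSpace ℝ (Fin 2)))) * d
      = (1 - s) * |((A 0 - D 0)*(B 1 - D 1) - (A 1 - D 1)*(B 0 - D 0))| := by
    rw [hd, L4, hdet4, abs_mul, abs_of_nonneg (sub_nonneg.2 hs.2.le)]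
  have r1 : t * |((B 0 - A 0)*(C 1 - A 1) - (B 1 - A 1)*(C 0 - A 0))| * b^2 = s * |((C 0 - B 0)*(D 1 - B 1) - (C 1 - B 1)*(D 0 - B 0))| * a^2 :=
    sq_eq_of_nonneg (mul_nonneg (mul_nonneg ht.1.le (abs_nonneg _)) (sq_nonneg _))
      (mul_nonneg (mul_nonneg hs.1.le (abs_nonneg _)) (sq_nonneg _))
      (rstep _ _ _ _ _ _ _ _ ha2 hb2 Q1)
  have r2 : s * |((C 0 - B 0)*(D 1 - B 1) - (C 1 - B 1)*(D 0 - B 0))| * c^2 = (1 - t) * |((D 0 - C 0)*(A 1 - C 1) - (D 1 - C 1)*(A 0 - C 0))| * b^2 :=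
    sq_eq_of_nonneg (mul_nonneg (mul_nonneg hs.1.le (abs_nonneg _)) (sq_nonneg _))
      (mul_nonneg (mul_nonneg (sub_nonneg.2 ht.2.le) (abs_nonneg _)) (sq_nonneg _))
      (rstep _ _ _ _ _ _ _ _ hb2 hc2 Q2)
  have r3 : (1 - t) * |((D 0 - C 0)*(A 1 - C 1) - (D 1 - C 1)*(A 0 - C 0))| * d^2 = (1 - s) * |((A 0 - D 0)*(B 1 - D 1) - (A 1 - D 1)*(B 0 - D 0))| * c^2 :=
    sq_eq_of_nonneg (mul_nonneg (mul_nonneg (sub_nonneg.2 ht.2.le) (abs_nonneg _)) (sq_nonneg _))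
      (mul_nonneg (mul_nonneg (sub_nonneg.2 hs.2.le) (abs_nonneg _)) (sq_nonneg _))
      (rstep _ _ _ _ _ _ _ _ hc2 hd2 Q3)
  refine ⟨part1, part2, ?_, ?_, ?_⟩
  · rw [div_eq_div_iff ha0.ne' hb0.ne']
    apply mul_right_cancel₀ (mul_ne_zero ha0.ne' hb0.ne')
    calc infDist K (affineSpan ℝ ({A, B} : Set (EuclideanSpace ℝ (Fin 2)))) * b * (a * b)
        = (infDist K (affineSpan ℝ ({A, B} : Set (EuclideanSpace ℝ (Fin 2)))) * a) * b^2 := by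
          ring
      _ = t * |((B 0 - A 0)*(C 1 - A 1) - (B 1 - A 1)*(C 0 - A 0))| * b^2 := by rw [L1']
      _ = s * |((C 0 - B 0)*(D 1 - B 1) - (C 1 - B 1)*(D 0 - B 0))| * a^2 := r1
      _ = (infDist K (affineSpan ℝ ({B, C} : Set (EuclideanSpace ℝ (Fin 2)))) * b) * a^2 := by
          rw [L2']
      _ = infDist K (affineSpan ℝ ({B, C} : Set (EuclideanSpace ℝ (Fin 2)))) * a * (a * b) := by
          ring
  · rw [div_eq_div_iff hb0.ne' hc0.ne']
    apply mul_right_cancel₀ (mul_ne_zero hb0.ne' hc0.ne')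
    calc infDist K (affineSpan ℝ ({B, C} : Set (EuclideanSpace ℝ (Fin 2)))) * c * (b * c)
        = (infDist K (affineSpan ℝ ({B, C} : Set (EuclideanSpace ℝ (Fin 2)))) * b) * c^2 := by
          ring
      _ = s * |((C 0 - B 0)*(D 1 - B 1) - (C 1 - B 1)*(D 0 - B 0))| * c^2 := by rw [L2']
      _ = (1 - t) * |((D 0 - C 0)*(A 1 - C 1) - (D 1 - C 1)*(A 0 - C 0))| * b^2 := r2
      _ = (infDist K (affineSpan ℝ ({C, D} : Set (EuclideanSpace ℝ (Fin 2)))) * c) * b^2 := by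
          rw [L3']
      _ = infDist K (affineSpan ℝ ({C, D} : Set (EuclideanSpace ℝ (Fin 2)))) * b * (b * c) := by
          ring
  · rw [div_eq_div_iff hc0.ne' hd0.ne']
    apply mul_right_cancel₀ (mul_ne_zero hc0.ne' hd0.ne')
    calc infDist K (affineSpan ℝ ({C, D} : Set (EuclideanSpace ℝ (Fin 2)))) * d * (c * d)
        = (infDist K (affineSpan ℝ ({C, D} : Set (EuclideanSpace ℝ (Fin 2)))) * c) * d^2 := by
          ring
      _ = (1 - t) * |((D 0 - C 0)*(A 1 - C 1) - (D 1 - C 1)*(A 0 - C 0))| * d^2 := by rw [L3']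
      _ = (1 - s) * |((A 0 - D 0)*(B 1 - D 1) - (A 1 - D 1)*(B 0 - D 0))| * c^2 := r3
      _ = (infDist K (affineSpan ℝ ({D, A} : Set (EuclideanSpace ℝ (Fin 2)))) * d) * c^2 := by
          rw [L4']
      _ = infDist K (affineSpan ℝ ({D, A} : Set (EuclideanSpace ℝ (Fin 2)))) * c * (c * d) := by
          ring
end

section
/- Let ABC be a triangle and M a point in its plane distinct from the vertices such that the perpendicular at M to line MA meets BC in A_m, the perpendicular at M to MB meets CA in B_m, and the perpendicular at M to MC meets AB in C_m. Then the points A_m, B_m, C_m are collinear (Bobillier's transversal). -/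
/-- If `(x0, x1)` is perpendicular to a nonzero vector `(a0, a1)`, then it is a
scalar multiple of the rotated vector `(-a1, a0)`. -/
lemma perp_decomp' (a0 a1 x0 x1 : ℝ) (ha : a0 ≠ 0 ∨ a1 ≠ 0)
    (h : x0 * a0 + x1 * a1 = 0) : ∃ s : ℝ, x0 = -(s * a1) ∧ x1 = s * a0 := by
  rcases ha with h0 | h1
  · refine ⟨x1 / a0, ?_, by field_simp⟩
    field_simp
    linarith
  · refine ⟨-x0 / a1, by field_simp, ?_⟩
    field_simp
    linarith

/-- Two planar vectors with vanishing cross product are proportional. -/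
lemma cross_zero_prop' (q0 q1 x0 x1 : ℝ) (hq : q0 ≠ 0 ∨ q1 ≠ 0)
    (h : q0 * x1 - q1 * x0 = 0) : ∃ t : ℝ, x0 = t * q0 ∧ x1 = t * q1 := by
  rcases hq with h0 | h1
  · refine ⟨x0 / q0, by field_simp, ?_⟩
    field_simp
    linarith
  · refine ⟨x1 / q1, ?_, by field_simp⟩
    field_simp
    linarith

/-- Extract the cross-product equation from collinearity of three planar points. -/
lemma cross_of_collinear' (P Q R : EuclideanSpace ℝ (Fin 2))
    (h : Collinear ℝ ({P, Q, R} : Set (EuclideanSpace ℝ (Fin 2)))) :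
    (Q 0 - P 0) * (R 1 - P 1) - (Q 1 - P 1) * (R 0 - P 0) = 0 := by
  obtain ⟨w, hw⟩ := (collinear_iff_of_mem (Set.mem_insert P _)).mp h
  obtain ⟨rQ, hQ⟩ := hw Q (by simp)
  obtain ⟨rR, hR⟩ := hw R (by simp)
  have hQ0 : Q 0 = rQ * w 0 + P 0 := by
    rw [hQ]; simp [vadd_eq_add, PiLp.add_apply, PiLp.smul_apply, smul_eq_mul]
  have hQ1 : Q 1 = rQ * w 1 + P 1 := by
    rw [hQ]; simp [vadd_eq_add, PiLp.add_apply, PiLp.smul_apply, smul_eq_mul]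
  have hR0 : R 0 = rR * w 0 + P 0 := by
    rw [hR]; simp [vadd_eq_add, PiLp.add_apply, PiLp.smul_apply, smul_eq_mul]
  have hR1 : R 1 = rR * w 1 + P 1 := by
    rw [hR]; simp [vadd_eq_add, PiLp.add_apply, PiLp.smul_apply, smul_eq_mul]
  rw [hQ0, hQ1, hR0, hR1]; ring

/-- Conversely, the cross-product equation implies collinearity of three planar
points. -/
lemma collinear_of_cross' (P Q R : EuclideanSpace ℝ (Fin 2))
    (h : (Q 0 - P 0) * (R 1 - P 1) - (Q 1 - P 1) * (R 0 - P 0) = 0) :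
    Collinear ℝ ({P, Q, R} : Set (EuclideanSpace ℝ (Fin 2))) := by
  by_cases hQP : Q = P
  · subst hQP
    rw [show ({Q, Q, R} : Set (EuclideanSpace ℝ (Fin 2))) = {Q, R} by
      simp [Set.insert_comm]]
    exact collinear_pair ℝ Q R
  · have hq : Q 0 - P 0 ≠ 0 ∨ Q 1 - P 1 ≠ 0 := by
      by_contra hc
      push_neg at hc
      exact hQP (by ext i; fin_cases i <;> simp <;> linarith [hc.1, hc.2])
    obtain ⟨t, ht0, ht1⟩ := cross_zero_prop' (Q 0 - P 0) (Q 1 - P 1)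
      (R 0 - P 0) (R 1 - P 1) hq (by linarith [h])
    refine (collinear_iff_of_mem (Set.mem_insert P _)).mpr ⟨Q -ᵥ P, ?_⟩
    intro p hp
    simp only [Set.mem_insert_iff, Set.mem_singleton_iff] at hp
    rcases hp with rfl | rfl | rfl
    · exact ⟨0, by simp⟩
    · exact ⟨1, by simp⟩
    · refine ⟨t, ?_⟩
      ext i
      fin_cases i <;>
        simp [vadd_eq_add, vsub_eq_sub, PiLp.add_apply, PiLp.sub_apply,
          PiLp.smul_apply, smul_eq_mul] <;> linarith

/-- Bobillier's transversal: if the perpendicular at `M` to `MA` meets line `BC`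
at `Am`, the perpendicular at `M` to `MB` meets line `CA` at `Bm`, and the
perpendicular at `M` to `MC` meets line `AB` at `Cm`, then `Am, Bm, Cm` are
collinear. -/
theorem stmt_18 (A B C M Am Bm Cm : EuclideanSpace ℝ (Fin 2))
    (hABC : AffineIndependent ℝ ![A, B, C])
    (hMA : M ≠ A) (hMB : M ≠ B) (hMC : M ≠ C)
    (hAmM : Am ≠ M) (hBmM : Bm ≠ M) (hCmM : Cm ≠ M)
    (hAm : Collinear ℝ ({B, C, Am} : Set (EuclideanSpace ℝ (Fin 2))))
    (hAmPerp : inner (𝕜 := ℝ) (Am -ᵥ M) (A -ᵥ M) = 0)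
    (hBm : Collinear ℝ ({C, A, Bm} : Set (EuclideanSpace ℝ (Fin 2))))
    (hBmPerp : inner (𝕜 := ℝ) (Bm -ᵥ M) (B -ᵥ M) = 0)
    (hCm : Collinear ℝ ({A, B, Cm} : Set (EuclideanSpace ℝ (Fin 2))))
    (hCmPerp : inner (𝕜 := ℝ) (Cm -ᵥ M) (C -ᵥ M) = 0) :
    Collinear ℝ ({Am, Bm, Cm} : Set (EuclideanSpace ℝ (Fin 2))) := by
  -- nonvanishing of the vectors from M to the vertices
  have ha : A 0 - M 0 ≠ 0 ∨ A 1 - M 1 ≠ 0 := by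
    by_contra hc; push_neg at hc
    exact hMA (by ext i; fin_cases i <;> simp <;> linarith [hc.1, hc.2])
  have hb : B 0 - M 0 ≠ 0 ∨ B 1 - M 1 ≠ 0 := by
    by_contra hc; push_neg at hc
    exact hMB (by ext i; fin_cases i <;> simp <;> linarith [hc.1, hc.2])
  have hc' : C 0 - M 0 ≠ 0 ∨ C 1 - M 1 ≠ 0 := by
    by_contra hc; push_neg at hc
    exact hMC (by ext i; fin_cases i <;> simp <;> linarith [hc.1, hc.2])
  -- perpendicularity hypotheses in coordinates
  have pA : (Am 0 - M 0) * (A 0 - M 0) + (Am 1 - M 1) * (A 1 - M 1) = 0 := by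
    have h := hAmPerp
    simp [PiLp.inner_apply, Fin.sum_univ_two, RCLike.inner_apply,
      vsub_eq_sub, PiLp.sub_apply] at h
    linear_combination h
  have pB : (Bm 0 - M 0) * (B 0 - M 0) + (Bm 1 - M 1) * (B 1 - M 1) = 0 := by
    have h := hBmPerp
    simp [PiLp.inner_apply, Fin.sum_univ_two, RCLike.inner_apply,
      vsub_eq_sub, PiLp.sub_apply] at h
    linear_combination h
  have pC : (Cm 0 - M 0) * (C 0 - M 0) + (Cm 1 - M 1) * (C 1 - M 1) = 0 := by
    have h := hCmPerp
    simp [PiLp.inner_apply, Fin.sum_univ_two, RCLike.inner_apply,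
      vsub_eq_sub, PiLp.sub_apply] at h
    linear_combination h
  -- decompose along the rotated direction
  obtain ⟨s, hs0, hs1⟩ := perp_decomp' (A 0 - M 0) (A 1 - M 1)
    (Am 0 - M 0) (Am 1 - M 1) ha pA
  obtain ⟨u, hu0, hu1⟩ := perp_decomp' (B 0 - M 0) (B 1 - M 1)
    (Bm 0 - M 0) (Bm 1 - M 1) hb pB
  obtain ⟨v, hv0, hv1⟩ := perp_decomp' (C 0 - M 0) (C 1 - M 1)
    (Cm 0 - M 0) (Cm 1 - M 1) hc' pC
  -- collinearity hypotheses in coordinates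
  have E1 := cross_of_collinear' B C Am hAm
  have E2 := cross_of_collinear' C A Bm hBm
  have E3 := cross_of_collinear' A B Cm hCm
  -- rewrite the coordinates of Am, Bm, Cm
  have hAm0 : Am 0 = M 0 - s * (A 1 - M 1) := by linarith
  have hAm1 : Am 1 = M 1 + s * (A 0 - M 0) := by linarith
  have hBm0 : Bm 0 = M 0 - u * (B 1 - M 1) := by linarith
  have hBm1 : Bm 1 = M 1 + u * (B 0 - M 0) := by linarith
  have hCm0 : Cm 0 = M 0 - v * (C 1 - M 1) := by linarith
  have hCm1 : Cm 1 = M 1 + v * (C 0 - M 0) := by linarith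
  rw [hAm0, hAm1] at E1
  rw [hBm0, hBm1] at E2
  rw [hCm0, hCm1] at E3
  apply collinear_of_cross'
  rw [hAm0, hAm1, hBm0, hBm1, hCm0, hCm1]
  linear_combination u * v * E1 + s * v * E2 + s * u * E3
end

section
/- In a complete quadrilateral ABCDEF (with E = AB ∩ CD, F = BC ∩ AD), the orthocenters H₁, H₂, H₃, H₄ of the four triangles ABF, AED, BCE, CDF are collinear, lying on the common radical axis of the three circles having the diagonals AC, BD, EF as diameters (Aubert's line). -/
open RealInnerProductSpace

private abbrev E2 := EuclideanSpace ℝ (Fin 2)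

/-- Parametrize a point on a line through two distinct points. -/
private lemma collinear_param {P Q R : E2} (h : Collinear ℝ ({P, Q, R} : Set E2))
    (hPQ : P ≠ Q) : ∃ t : ℝ, R - P = t • (Q - P) := by
  obtain ⟨v, hv⟩ := (collinear_iff_of_mem (show P ∈ ({P, Q, R} : Set E2) by simp)).1 h
  obtain ⟨r₁, hr₁⟩ := hv Q (by simp)
  obtain ⟨r₂, hr₂⟩ := hv R (by simp)
  have hr₁0 : r₁ ≠ 0 := by
    rintro rfl
    simp at hr₁
    exact hPQ hr₁.symm
  refine ⟨r₂ / r₁, ?_⟩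
  have hQ : Q - P = r₁ • v := by simp [hr₁]
  have hR : R - P = r₂ • v := by simp [hr₂]
  rw [hQ, hR, smul_smul, div_mul_cancel₀ _ hr₁0]

/-- Converse: a linear relation gives collinearity. -/
private lemma collinear_of {P Q R : E2} (r : ℝ) (h : R - P = r • (Q - P)) :
    Collinear ℝ ({P, Q, R} : Set E2) := by
  rw [collinear_iff_of_mem (show P ∈ ({P, Q, R} : Set E2) by simp)]
  refine ⟨Q - P, ?_⟩
  rintro p (rfl | rfl | rfl)
  · exact ⟨0, by simp⟩
  · exact ⟨1, by simp⟩
  · exact ⟨r, by rw [← h]; simp⟩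

private lemma inner_line {H A P Q X : E2} {k t : ℝ} (hX : X - P = t • (Q - P))
    (hP : ⟪H - A, H - P⟫ = k) (hQ : ⟪H - A, H - Q⟫ = k) :
    ⟪H - A, H - X⟫ = k := by
  have hHX : H - X = (H - P) + t • ((H - Q) - (H - P)) := by
    rw [show (H - Q) - (H - P) = -(Q - P) by abel, smul_neg, ← hX]; abel
  rw [hHX]
  simp only [inner_add_right, inner_smul_right, inner_sub_right]
  simp only [← inner_sub_right, hP, hQ]
  ring

/-- Core lemma: the orthocenter of triangle `ABF` has equal powers w.r.t. the
circles on diameters `AC`, `BD`, `EF`, where `C ∈ BF`, `D ∈ AF`, `E ∈ AB`. -/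
private lemma core {H A B F C D E : E2}
    (o1 : ⟪H - A, B - F⟫ = 0) (o2 : ⟪H - B, A - F⟫ = 0)
    (hC : ∃ t : ℝ, C - B = t • (F - B))
    (hD : ∃ t : ℝ, D - A = t • (F - A))
    (hE : ∃ t : ℝ, E - A = t • (B - A)) :
    ⟪H - A, H - C⟫ = ⟪H - B, H - D⟫ ∧ ⟪H - B, H - D⟫ = ⟪H - E, H - F⟫ := by
  set k := ⟪H - A, H - B⟫ with hk
  have e1 : ⟪H - A, H - F⟫ = k := by
    have : B - F = (H - F) - (H - B) := by abel
    rw [this, inner_sub_right, sub_eq_zero] at o1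
    rw [o1, hk]
  have e2 : ⟪H - B, H - F⟫ = k := by
    have : A - F = (H - F) - (H - A) := by abel
    rw [this, inner_sub_right, sub_eq_zero] at o2
    rw [o2, hk, real_inner_comm]
  obtain ⟨t₁, hC⟩ := hC
  obtain ⟨t₂, hD⟩ := hD
  obtain ⟨t₃, hE⟩ := hE
  have pA : ⟪H - A, H - C⟫ = k := inner_line hC rfl e1
  have pB : ⟪H - B, H - D⟫ = k := inner_line hD (by rw [real_inner_comm]) e2
  have pE : ⟪H - E, H - F⟫ = k := by
    rw [real_inner_comm]
    exact inner_line hE (by rw [real_inner_comm]; exact e1) (by rw [real_inner_comm]; exact e2)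
  rw [pA, pB, pE]
  exact ⟨rfl, rfl⟩

private noncomputable def perp (u : E2) : E2 :=
  (EuclideanSpace.equiv (Fin 2) ℝ).symm ![-u 1, u 0]

private lemma perp_apply0 (u : E2) : perp u 0 = -u 1 := rfl
private lemma perp_apply1 (u : E2) : perp u 1 = u 0 := rfl

private lemma inner_coords (x y : E2) : ⟪x, y⟫ = x 0 * y 0 + x 1 * y 1 := by
  simp [PiLp.inner_apply, Fin.sum_univ_two, RCLike.inner_apply]
  ring

private lemma perp_param {u d : E2} (hu : u ≠ 0) (h : ⟪d, u⟫ = 0) :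
    ∃ t : ℝ, d = t • perp u := by
  have hcoord : d 0 * u 0 + d 1 * u 1 = 0 := by rw [← inner_coords, h]
  have hne : u 0 ^ 2 + u 1 ^ 2 ≠ 0 := by
    intro h0
    apply hu
    have h1 : u 0 = 0 := by nlinarith [sq_nonneg (u 0), sq_nonneg (u 1)]
    have h2 : u 1 = 0 := by nlinarith [sq_nonneg (u 0), sq_nonneg (u 1)]
    ext i
    fin_cases i <;> simpa
  refine ⟨(d 1 * u 0 - d 0 * u 1) / (u 0 ^ 2 + u 1 ^ 2), ?_⟩
  ext i
  fin_cases i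
  · show d 0 = _ * perp u 0
    rw [perp_apply0]
    field_simp
    linear_combination u 0 * hcoord
  · show d 1 = _ * perp u 1
    rw [perp_apply1]
    field_simp
    linear_combination u 1 * hcoord

private lemma ai_ne {P Q R : E2} (h : AffineIndependent ℝ ![P, Q, R]) :
    P ≠ Q ∧ P ≠ R ∧ Q ≠ R := by
  refine ⟨?_, ?_, ?_⟩
  · simpa using h.injective.ne (show (0 : Fin 3) ≠ 1 by decide)
  · simpa using h.injective.ne (show (0 : Fin 3) ≠ 2 by decide)
  · simpa using h.injective.ne (show (1 : Fin 3) ≠ 2 by decide)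

private lemma nondeg {A B C D E F : E2}
    (hABF : AffineIndependent ℝ ![A, B, F])
    (hBCE : AffineIndependent ℝ ![B, C, E])
    (hCDF : AffineIndependent ℝ ![C, D, F])
    (hE1 : Collinear ℝ ({A, B, E} : Set E2))
    (hE2 : Collinear ℝ ({C, D, E} : Set E2))
    (hF1 : Collinear ℝ ({B, C, F} : Set E2)) :
    (B + D) - (A + C) ≠ 0 := by
  intro h0
  have heq : B + D = A + C := by rwa [sub_eq_zero] at h0
  have hAB : A ≠ B := (ai_ne hABF).1
  have hCD : C ≠ D := (ai_ne hCDF).1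
  have hBC : B ≠ C := (ai_ne hBCE).1
  obtain ⟨e₁, he₁⟩ := collinear_param hE1 hAB
  obtain ⟨e₂, he₂⟩ := collinear_param hE2 hCD
  obtain ⟨f₁, hf₁⟩ := collinear_param hF1 hBC
  have hw : D - C = A - B := by
    rw [sub_eq_sub_iff_add_eq_add, add_comm D B, add_comm A C, heq, add_comm A C]
  rw [hw] at he₂
  have hCA : C - A = (e₁ + e₂) • (B - A) := by
    have h1 : C - A = (E - A) - (E - C) := by abel
    rw [h1, he₁, he₂]
    module
  have hCB : C - B = (e₁ + e₂ - 1) • (B - A) := by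
    have h1 : C - B = (C - A) - (B - A) := by abel
    rw [h1, hCA]
    module
  have hFA : F - A = (f₁ * (e₁ + e₂ - 1) + 1) • (B - A) := by
    have h1 : F - A = (F - B) + (B - A) := by abel
    rw [h1, hf₁, hCB]
    module
  exact (affineIndependent_iff_not_collinear_set.1 hABF) (collinear_of _ hFA)

/-- If two points have equal power differences w.r.t. circles on diameters
`AC` and `BD`, their difference is orthogonal to `(B + D) - (A + C)`. -/
private lemma radical_perp {A B C D X Y : E2}
    (hX : ⟪X - A, X - C⟫ = ⟪X - B, X - D⟫)
    (hY : ⟪Y - A, Y - C⟫ = ⟪Y - B, Y - D⟫) :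
    ⟪X - Y, (B + D) - (A + C)⟫ = 0 := by
  simp only [inner_sub_left, inner_sub_right, inner_add_right] at hX hY ⊢
  linarith [real_inner_comm X A, real_inner_comm X B, real_inner_comm X C,
    real_inner_comm X D, real_inner_comm Y A, real_inner_comm Y B,
    real_inner_comm Y C, real_inner_comm Y D, real_inner_comm X Y]

/-- Aubert's line: in a complete quadrilateral `ABCDEF` (with `E = AB ∩ CD` and
`F = BC ∩ AD`), the orthocenters `H₁, H₂, H₃, H₄` of the triangles `ABF`, `AED`,
`BCE`, `CDF` are collinear, lying on the common radical axis of the three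
circles with the diagonals `AC`, `BD`, `EF` as diameters (the power of a point
`X` with respect to the circle on diameter `PQ` being `⟪X-P, X-Q⟫`). -/
theorem stmt_19 (A B C D E F H₁ H₂ H₃ H₄ : EuclideanSpace ℝ (Fin 2))
    (hABF : AffineIndependent ℝ ![A, B, F])
    (hAED : AffineIndependent ℝ ![A, E, D])
    (hBCE : AffineIndependent ℝ ![B, C, E])
    (hCDF : AffineIndependent ℝ ![C, D, F])
    (hE1 : Collinear ℝ ({A, B, E} : Set (EuclideanSpace ℝ (Fin 2))))
    (hE2 : Collinear ℝ ({C, D, E} : Set (EuclideanSpace ℝ (Fin 2))))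
    (hF1 : Collinear ℝ ({B, C, F} : Set (EuclideanSpace ℝ (Fin 2))))
    (hF2 : Collinear ℝ ({A, D, F} : Set (EuclideanSpace ℝ (Fin 2))))
    (hH₁ : inner (𝕜 := ℝ) (H₁ -ᵥ A) (B -ᵥ F) = 0 ∧
           inner (𝕜 := ℝ) (H₁ -ᵥ B) (A -ᵥ F) = 0)
    (hH₂ : inner (𝕜 := ℝ) (H₂ -ᵥ A) (E -ᵥ D) = 0 ∧
           inner (𝕜 := ℝ) (H₂ -ᵥ E) (A -ᵥ D) = 0)
    (hH₃ : inner (𝕜 := ℝ) (H₃ -ᵥ B) (C -ᵥ E) = 0 ∧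
           inner (𝕜 := ℝ) (H₃ -ᵥ C) (B -ᵥ E) = 0)
    (hH₄ : inner (𝕜 := ℝ) (H₄ -ᵥ C) (D -ᵥ F) = 0 ∧
           inner (𝕜 := ℝ) (H₄ -ᵥ D) (C -ᵥ F) = 0) :
    Collinear ℝ ({H₁, H₂, H₃, H₄} : Set (EuclideanSpace ℝ (Fin 2))) ∧
    (∀ H ∈ ({H₁, H₂, H₃, H₄} : Set (EuclideanSpace ℝ (Fin 2))),
      inner (𝕜 := ℝ) (H -ᵥ A) (H -ᵥ C) = inner (𝕜 := ℝ) (H -ᵥ B) (H -ᵥ D) ∧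
      inner (𝕜 := ℝ) (H -ᵥ B) (H -ᵥ D) = inner (𝕜 := ℝ) (H -ᵥ E) (H -ᵥ F)) := by
  simp only [vsub_eq_sub] at hH₁ hH₂ hH₃ hH₄ ⊢
  -- distinctness
  obtain ⟨hAB, hAF, hBF⟩ := ai_ne hABF
  obtain ⟨hAE, hAD, hED⟩ := ai_ne hAED
  obtain ⟨hBC, hBE, hCE⟩ := ai_ne hBCE
  obtain ⟨hCD, hCF, hDF⟩ := ai_ne hCDF
  -- reordered collinearity facts
  have hE1' : Collinear ℝ ({A, E, B} : Set E2) := hE1.subset (by intro x; simp; tauto)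
  have hE1'' : Collinear ℝ ({B, E, A} : Set E2) := hE1.subset (by intro x; simp; tauto)
  have hE2' : Collinear ℝ ({E, D, C} : Set E2) := hE2.subset (by intro x; simp; tauto)
  have hE2'' : Collinear ℝ ({C, E, D} : Set E2) := hE2.subset (by intro x; simp; tauto)
  have hF1' : Collinear ℝ ({B, F, C} : Set E2) := hF1.subset (by intro x; simp; tauto)
  have hF1'' : Collinear ℝ ({C, F, B} : Set E2) := hF1.subset (by intro x; simp; tauto)
  have hF2' : Collinear ℝ ({A, F, D} : Set E2) := hF2.subset (by intro x; simp; tauto)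
  have hF2'' : Collinear ℝ ({D, F, A} : Set E2) := hF2.subset (by intro x; simp; tauto)
  -- powers of the four orthocenters
  have p₁ : ⟪H₁ - A, H₁ - C⟫ = ⟪H₁ - B, H₁ - D⟫ ∧ ⟪H₁ - B, H₁ - D⟫ = ⟪H₁ - E, H₁ - F⟫ :=
    core hH₁.1 hH₁.2 (collinear_param hF1' hBF) (collinear_param hF2' hAF)
      (collinear_param hE1 hAB)
  have p₂' := core (H := H₂) (A := A) (B := E) (F := D) (C := C) (D := F) (E := B)
    hH₂.1 hH₂.2 (collinear_param hE2' hED) (collinear_param hF2 hAD)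
    (collinear_param hE1' hAE)
  have p₂ : ⟪H₂ - A, H₂ - C⟫ = ⟪H₂ - B, H₂ - D⟫ ∧ ⟪H₂ - B, H₂ - D⟫ = ⟪H₂ - E, H₂ - F⟫ :=
    ⟨p₂'.1.trans p₂'.2, p₂'.2.symm⟩
  have p₃' := core (H := H₃) (A := B) (B := C) (F := E) (C := D) (D := A) (E := F)
    hH₃.1 hH₃.2 (collinear_param hE2'' hCE) (collinear_param hE1'' hBE)
    (collinear_param hF1 hBC)
  have p₃ : ⟪H₃ - A, H₃ - C⟫ = ⟪H₃ - B, H₃ - D⟫ ∧ ⟪H₃ - B, H₃ - D⟫ = ⟪H₃ - E, H₃ - F⟫ := by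
    have c1 : ⟪H₃ - A, H₃ - C⟫ = ⟪H₃ - C, H₃ - A⟫ := real_inner_comm _ _
    have c2 : ⟪H₃ - E, H₃ - F⟫ = ⟪H₃ - F, H₃ - E⟫ := real_inner_comm _ _
    exact ⟨c1.trans p₃'.1.symm, (p₃'.1.trans p₃'.2).trans c2.symm⟩
  have p₄' := core (H := H₄) (A := C) (B := D) (F := F) (C := A) (D := B) (E := E)
    hH₄.1 hH₄.2 (collinear_param hF2'' hDF) (collinear_param hF1'' hCF)
    (collinear_param hE2 hCD)
  have p₄ : ⟪H₄ - A, H₄ - C⟫ = ⟪H₄ - B, H₄ - D⟫ ∧ ⟪H₄ - B, H₄ - D⟫ = ⟪H₄ - E, H₄ - F⟫ := by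
    have c1 : ⟪H₄ - A, H₄ - C⟫ = ⟪H₄ - C, H₄ - A⟫ := real_inner_comm _ _
    have c2 : ⟪H₄ - B, H₄ - D⟫ = ⟪H₄ - D, H₄ - B⟫ := real_inner_comm _ _
    exact ⟨(c1.trans p₄'.1).trans c2.symm, c2.trans p₄'.2⟩
  refine ⟨?_, ?_⟩
  · -- collinearity via the radical axis direction
    have hu : (B + D) - (A + C) ≠ 0 := nondeg hABF hBCE hCDF hE1 hE2 hF1
    obtain ⟨t₂, ht₂⟩ := perp_param hu (radical_perp p₂.1 p₁.1)
    obtain ⟨t₃, ht₃⟩ := perp_param hu (radical_perp p₃.1 p₁.1)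
    obtain ⟨t₄, ht₄⟩ := perp_param hu (radical_perp p₄.1 p₁.1)
    rw [collinear_iff_of_mem (show H₁ ∈ ({H₁, H₂, H₃, H₄} : Set E2) by simp)]
    refine ⟨perp ((B + D) - (A + C)), ?_⟩
    rintro p (rfl | rfl | rfl | rfl)
    · exact ⟨0, by simp⟩
    · exact ⟨t₂, by rw [← ht₂]; simp⟩
    · exact ⟨t₃, by rw [← ht₃]; simp⟩
    · exact ⟨t₄, by rw [← ht₄]; simp⟩
  · rintro H (rfl | rfl | rfl | rfl)
    exacts [p₁, p₂, p₃, p₄]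
end
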